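/- arXiv:1905.07301 — 4 statements merged into one kernel-verified Lean document; each statement's English description precedes it below -/
import Mathlib

section
/- If {e1, e2} is a removable doubleton of a brick G, then e1 and e2 are mutually dependent, i.e., every perfect matching of G contains both e1 and e2 or neither of them. -/
namespace Paper

open SimpleGraph

variable {V : Type*}

/-- `∂(X)`: the set of edges of `G` with exactly one end in `X`. -/
def cutEdges (G : SimpleGraph V) (X : Set V) : Set (Sym2 V) :=
  {e | e ∈ G.edgeSet ∧ ∃ x y, e = s(x, y) ∧ x ∈ X ∧ y ∉ X}

/-- An edge cut `∂(X)` is trivial if `X` or its complement is a singleton. -/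
def IsTrivialShore (X : Set V) : Prop :=
  (∃ v, X = {v}) ∨ (∃ v, Xᶜ = {v})

/-- The edge cut `∂(X)` is tight: every perfect matching contains exactly one of its edges. -/
def IsTightCut (G : SimpleGraph V) (X : Set V) : Prop :=
  ∀ M : G.Subgraph, M.IsPerfectMatching → (M.edgeSet ∩ cutEdges G X).ncard = 1

/-- A connected graph with at least one edge in which every edge lies in a perfect matching. -/
def MatchingCovered (G : SimpleGraph V) : Prop :=
  G.Connected ∧ G.edgeSet.Nonempty ∧
    ∀ e ∈ G.edgeSet, ∃ M : G.Subgraph, M.IsPerfectMatching ∧ e ∈ M.edgeSet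

/-- A brick: a non-bipartite matching covered graph with no nontrivial tight cut. -/
def IsBrick (G : SimpleGraph V) : Prop :=
  MatchingCovered G ∧ ¬ G.Colorable 2 ∧
    ∀ X : Set V, IsTightCut G X → IsTrivialShore X

/-- Two edges are mutually dependent if every perfect matching contains both or neither. -/
def MutuallyDependent (G : SimpleGraph V) (e f : Sym2 V) : Prop :=
  e ∈ G.edgeSet ∧ f ∈ G.edgeSet ∧
    ∀ M : G.Subgraph, M.IsPerfectMatching → (e ∈ M.edgeSet ↔ f ∈ M.edgeSet)

/-- An edge `e` of `G` is removable if `G − e` is matching covered. -/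
def Removable (G : SimpleGraph V) (e : Sym2 V) : Prop :=
  e ∈ G.edgeSet ∧ MatchingCovered (G.deleteEdges {e})

/-- `{e, f}` is a removable doubleton of `G`. -/
def RemovableDoubleton (G : SimpleGraph V) (e f : Sym2 V) : Prop :=
  e ∈ G.edgeSet ∧ f ∈ G.edgeSet ∧ e ≠ f ∧
    ¬ Removable G e ∧ ¬ Removable G f ∧ MatchingCovered (G.deleteEdges {e, f})

/-- A cubic graph: every vertex has degree 3. -/
def Cubic (G : SimpleGraph V) : Prop := ∀ v : V, (G.neighborSet v).ncard = 3

/-- A cubic graph is essentially 4-edge-connected if it is 2-edge-connected and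
every 3-cut is trivial. -/
def EssFourEdgeConnected (G : SimpleGraph V) : Prop :=
  (∀ X : Set V, X.Nonempty → Xᶜ.Nonempty → 2 ≤ (cutEdges G X).ncard) ∧
    ∀ X : Set V, (cutEdges G X).ncard = 3 → IsTrivialShore X

/-- A non-bipartite matching covered graph is near-bipartite if removing some pair of
edges yields a bipartite matching covered graph. -/
def NearBipartite (G : SimpleGraph V) : Prop :=
  MatchingCovered G ∧ ¬ G.Colorable 2 ∧
    ∃ e f : Sym2 V, e ∈ G.edgeSet ∧ f ∈ G.edgeSet ∧ e ≠ f ∧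
      (G.deleteEdges {e, f}).Colorable 2 ∧ MatchingCovered (G.deleteEdges {e, f})

/-- The set of edges of `G` joining a vertex of `X` to a vertex of `Y`. -/
def betweenEdges (G : SimpleGraph V) (X Y : Set V) : Set (Sym2 V) :=
  {e | e ∈ G.edgeSet ∧ ∃ x ∈ X, ∃ y ∈ Y, e = s(x, y)}


/-- Transfer a subgraph of `G` to a subgraph of `G'` when its adjacency lands in `G'`. -/
def transferSub {G G' : SimpleGraph V} (M : G.Subgraph)
    (h : ∀ v w, M.Adj v w → G'.Adj v w) : G'.Subgraph where
  verts := M.verts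
  Adj := M.Adj
  adj_sub := h _ _
  edge_vert := M.edge_vert
  symm := M.symm

lemma transferSub_edgeSet {G G' : SimpleGraph V} (M : G.Subgraph)
    (h : ∀ v w, M.Adj v w → G'.Adj v w) :
    (transferSub M h).edgeSet = M.edgeSet := rfl

lemma transferSub_pm {G G' : SimpleGraph V} (M : G.Subgraph)
    (h : ∀ v w, M.Adj v w → G'.Adj v w) (hM : M.IsPerfectMatching) :
    (transferSub M h).IsPerfectMatching := hM

lemma key {V : Type*} (G : SimpleGraph V) (e1 e2 : Sym2 V)
    (he1E : e1 ∈ G.edgeSet) (he2E : e2 ∈ G.edgeSet) (hne : e1 ≠ e2)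
    (hnr : ¬ Removable G e1)
    (hH : MatchingCovered (G.deleteEdges {e1, e2}))
    (M : G.Subgraph) (hM : M.IsPerfectMatching) (h1 : e1 ∉ M.edgeSet) :
    e2 ∉ M.edgeSet := by
  intro h2
  apply hnr
  have hle : G.deleteEdges {e1, e2} ≤ G.deleteEdges {e1} := by
    intro v w hvw
    rw [deleteEdges_adj] at hvw ⊢
    exact ⟨hvw.1, fun hc => hvw.2 (by simp [Set.mem_singleton_iff.mp hc])⟩
  refine ⟨he1E, hH.1.mono hle, ⟨e2, ?_⟩, ?_⟩
  · rw [edgeSet_deleteEdges]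
    exact ⟨he2E, by simp [hne.symm]⟩
  · intro f hf
    rw [edgeSet_deleteEdges, Set.mem_diff, Set.mem_singleton_iff] at hf
    by_cases hfe2 : f = e2
    · refine ⟨transferSub M (fun v w hvw => ?_), hM, by rw [transferSub_edgeSet]; exact hfe2 ▸ h2⟩
      rw [deleteEdges_adj]
      refine ⟨M.adj_sub hvw, fun hc => h1 ?_⟩
      rw [Set.mem_singleton_iff] at hc
      rw [← hc]
      exact Subgraph.mem_edgeSet.mpr hvw
    · have hfH : f ∈ (G.deleteEdges {e1, e2}).edgeSet := by
        rw [edgeSet_deleteEdges]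
        exact ⟨hf.1, by simp [hf.2, hfe2]⟩
      obtain ⟨N, hN, hfN⟩ := hH.2.2 f hfH
      exact ⟨transferSub N (fun v w hvw => hle (N.adj_sub hvw)), hN, hfN⟩

/-- If `{e1, e2}` is a removable doubleton of a brick `G`, then every
perfect matching of `G` contains both `e1` and `e2` or neither of them. -/
theorem stmt2 {V : Type*} [Fintype V] (G : SimpleGraph V) (hG : IsBrick G)
    (e1 e2 : Sym2 V) (hd : RemovableDoubleton G e1 e2) :
    ∀ M : G.Subgraph, M.IsPerfectMatching →
      ((e1 ∈ M.edgeSet ∧ e2 ∈ M.edgeSet) ∨ (e1 ∉ M.edgeSet ∧ e2 ∉ M.edgeSet)) := by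
  intro M hM
  by_cases h1 : e1 ∈ M.edgeSet
  · left
    refine ⟨h1, ?_⟩
    by_contra h2
    exact key G e2 e1 hd.2.1 hd.1 hd.2.2.1.symm hd.2.2.2.2.1
      (by rw [Set.pair_comm]; exact hd.2.2.2.2.2) M hM h2 h1
  · exact Or.inr ⟨h1, key G e1 e2 hd.1 hd.2.1 hd.2.2.1 hd.2.2.2.1 hd.2.2.2.2.2 M hM h1⟩

end Paper
end

section
/- Let G be a bipartite matching covered graph with bipartition (A, B), and suppose e1 and e2 are two distinct mutually dependent edges of G. Then {e1, e2} is a 2-edge-cut of G separating G into two balanced parts; that is, there exists a set X of vertices with ∅ ≠ X ≠ V(G) such that the set of edges with exactly one end in X is precisely {e1, e2}, and |X ∩ A| = |X ∩ B| (and consequently the complement of X also meets A and B in sets of equal size). -/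
namespace Paper

open SimpleGraph

variable {V : Type*}

open scoped symmDiff

def GoodDart (G : SimpleGraph V) (M0 : G.Subgraph) (A : Set V) (e2 : Sym2 V) (u v : V) : Prop :=
  s(u, v) ≠ e2 ∧ (M0.Adj u v ↔ u ∈ A)

lemma exchange [DecidableEq V] {G : SimpleGraph V} {A : Set V}
    (hside : ∀ x y, G.Adj x y → (x ∈ A ↔ y ∉ A))
    {M0 : G.Subgraph} (hM0 : M0.IsPerfectMatching)
    {e2 : Sym2 V} {a1 b1 : V}
    (hm01 : M0.Adj a1 b1) (ha1 : a1 ∈ A)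
    (he2 : e2 ∈ M0.edgeSet) (hne : s(a1, b1) ≠ e2)
    (hrtg : Relation.ReflTransGen
      (fun u v => G.Adj u v ∧ GoodDart G M0 A e2 u v) b1 a1) :
    ∃ M : G.Subgraph, M.IsPerfectMatching ∧ s(a1, b1) ∉ M.edgeSet ∧ e2 ∈ M.edgeSet := by
  classical
  have hadj : G.Adj a1 b1 := M0.adj_sub hm01
  have hb1A : b1 ∉ A := (hside a1 b1 hadj).mp ha1
  -- step 1 : build a directed walk
  have hwalk : ∀ v, Relation.ReflTransGen
      (fun u v => G.Adj u v ∧ GoodDart G M0 A e2 u v) v a1 →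
      ∃ w : G.Walk v a1, ∀ d ∈ w.darts, GoodDart G M0 A e2 d.fst d.snd := by
    intro v hv
    induction hv using Relation.ReflTransGen.head_induction_on with
    | refl => exact ⟨Walk.nil, by simp⟩
    | head h _ ih =>
      obtain ⟨w, hw⟩ := ih
      exact ⟨Walk.cons h.1 w, by
        intro d hd
        rw [Walk.darts_cons, List.mem_cons] at hd
        rcases hd with rfl | hd
        · exact h.2
        · exact hw d hd⟩
  obtain ⟨w0, hw0⟩ := hwalk b1 hrtg
  -- step 2 : bypass to a path
  set p := w0.bypass with hp_def
  have hp : p.IsPath := w0.bypass_isPath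
  have hpd : ∀ d ∈ p.darts, GoodDart G M0 A e2 d.fst d.snd := fun d hd =>
    hw0 d (w0.darts_bypass_subset hd)
  have hpnd : p.support.Nodup := hp.support_nodup
  -- a1 (the endpoint) is not in dropLast of support
  have ha1dl : a1 ∉ p.support.dropLast := by
    intro hmem
    have h2 := List.dropLast_append_getLast (l := p.support) p.support_ne_nil
    rw [← h2, List.nodup_append] at hpnd
    exact hpnd.2.2 a1 hmem a1 (by simp [p.getLast_support]) rfl
  -- closing edge not in path edges
  have he1p : s(a1, b1) ∉ p.edges := by
    intro hmem
    obtain ⟨d, hd, hde⟩ := List.mem_map.mp hmem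
    have : s(d.fst, d.snd) = s(a1, b1) := hde
    rw [Sym2.eq_iff] at this
    rcases this with ⟨h1, h2⟩ | ⟨h1, h2⟩
    · -- dart (a1, b1) : a1 has an out-dart in p, impossible
      apply ha1dl
      rw [← p.map_fst_darts]
      exact List.mem_map.mpr ⟨d, hd, h1⟩
    · -- dart (b1, a1) : wrong direction
      have hg := (hpd d hd).2
      rw [h1, h2] at hg
      exact hb1A (hg.mp hm01.symm)
  -- the cycle
  set c : G.Walk a1 a1 := Walk.cons hadj p with hc_def
  have hcyc : c.IsCycle := (Walk.cons_isCycle_iff p hadj).mpr ⟨hp, he1p⟩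
  have hcd : ∀ d ∈ c.darts, GoodDart G M0 A e2 d.fst d.snd := by
    intro d hd
    rw [hc_def, Walk.darts_cons, List.mem_cons] at hd
    rcases hd with rfl | hd
    · exact ⟨hne, by simp [hm01, ha1]⟩
    · exact hpd d hd
  have hsupc : c.support = a1 :: p.support := Walk.support_cons _ _
  have hpsne : p.support ≠ [] := p.support_ne_nil
  have hdlc : c.support.dropLast = a1 :: p.support.dropLast := by
    rw [hsupc]
    cases hs : p.support with
    | nil => exact absurd hs hpsne
    | cons a t => rfl
  -- nodup fst and snd lists
  have hfst_nodup : (c.darts.map (·.fst)).Nodup := by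
    rw [Walk.map_fst_darts, hdlc]
    exact List.nodup_cons.mpr ⟨ha1dl, hpnd.sublist (List.dropLast_sublist _)⟩
  have hsnd_nodup : (c.darts.map (·.snd)).Nodup := by
    rw [Walk.map_snd_darts, hsupc]
    exact hpnd
  have hfstU : ∀ d ∈ c.darts, ∀ d' ∈ c.darts, d.fst = d'.fst → d = d' :=
    List.inj_on_of_nodup_map hfst_nodup
  have hsndU : ∀ d ∈ c.darts, ∀ d' ∈ c.darts, d.snd = d'.snd → d = d' :=
    List.inj_on_of_nodup_map hsnd_nodup
  have hedge_nodup : c.edges.Nodup := hcyc.isCircuit.isTrail.edges_nodup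
  have hedgeU : ∀ d ∈ c.darts, ∀ d' ∈ c.darts, d.edge = d'.edge → d = d' :=
    List.inj_on_of_nodup_map hedge_nodup
  -- existence of in/out darts for support vertices
  have hout : ∀ v ∈ c.support, ∃ d ∈ c.darts, d.fst = v := by
    intro v hv
    have : v ∈ c.support.dropLast := by
      rw [hdlc]
      rw [hsupc, List.mem_cons] at hv
      rcases hv with rfl | hv
      · exact List.mem_cons_self
      · have hsplit : p.support.dropLast ++ [p.support.getLast hpsne] = p.support :=
          List.dropLast_append_getLast hpsne
        rcases List.mem_append.mp (hsplit ▸ hv) with h | h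
        · exact List.mem_cons_of_mem _ h
        · simp only [List.mem_singleton] at h
          rw [h, p.getLast_support]
          exact List.mem_cons_self
    rw [← Walk.map_fst_darts] at this
    obtain ⟨d, hd, hdv⟩ := List.mem_map.mp this
    exact ⟨d, hd, hdv⟩
  have hin : ∀ v ∈ c.support, ∃ d ∈ c.darts, d.snd = v := by
    intro v hv
    have : v ∈ c.support.tail := by
      rw [hsupc, List.tail_cons]
      rw [hsupc, List.mem_cons] at hv
      rcases hv with rfl | hv
      · exact p.end_mem_support
      · exact hv
    rw [← Walk.map_snd_darts] at this
    obtain ⟨d, hd, hdv⟩ := List.mem_map.mp this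
    exact ⟨d, hd, hdv⟩
  -- the cycle graph
  set C : SimpleGraph V := c.toSubgraph.spanningCoe with hC_def
  have hCadj : ∀ x y : V, C.Adj x y ↔ s(x, y) ∈ c.edges := by
    intro x y
    rw [hC_def, Subgraph.spanningCoe_adj, ← Subgraph.mem_edgeSet, Walk.mem_edges_toSubgraph]
  have hCdart : ∀ x y : V, C.Adj x y →
      (∃ d ∈ c.darts, d.fst = x ∧ d.snd = y) ∨ (∃ d ∈ c.darts, d.fst = y ∧ d.snd = x) := by
    intro x y hxy
    rw [hCadj] at hxy
    obtain ⟨d, hd, hde⟩ := List.mem_map.mp hxy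
    have : s(d.fst, d.snd) = s(x, y) := hde
    rw [Sym2.eq_iff] at this
    rcases this with ⟨h1, h2⟩ | ⟨h1, h2⟩
    · exact Or.inl ⟨d, hd, h1, h2⟩
    · exact Or.inr ⟨d, hd, h1, h2⟩
  have hCmem : ∀ x y : V, C.Adj x y → x ∈ c.support := by
    intro x y hxy
    rcases hCdart x y hxy with ⟨d, hd, h1, _⟩ | ⟨d, hd, _, h2⟩
    · rw [← h1]; exact Walk.dart_fst_mem_support_of_mem_darts _ hd
    · rw [← h2]; exact Walk.dart_snd_mem_support_of_mem_darts _ hd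
  -- neighbor set description
  have hnbr : ∀ v ∈ c.support, ∃ dO ∈ c.darts, ∃ dI ∈ c.darts,
      dO.fst = v ∧ dI.snd = v ∧ dO.snd ≠ dI.fst ∧
      C.neighborSet v = {dO.snd, dI.fst} := by
    intro v hv
    obtain ⟨dO, hdO, hdOv⟩ := hout v hv
    obtain ⟨dI, hdI, hdIv⟩ := hin v hv
    have hneOI : dO.snd ≠ dI.fst := by
      intro heq
      have hOe : dO.edge = s(v, dO.snd) := by rw [← hdOv]; rfl
      have hIe : dI.edge = s(v, dO.snd) := by
        rw [show dI.edge = s(dI.fst, dI.snd) from rfl, hdIv, ← heq]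
        exact Sym2.eq_swap
      have heqd := hedgeU dO hdO dI hdI (by rw [hOe, hIe])
      rw [← heqd] at heq
      exact G.irrefl (heq ▸ dO.adj)
    refine ⟨dO, hdO, dI, hdI, hdOv, hdIv, hneOI, ?_⟩
    ext x
    simp only [mem_neighborSet, Set.mem_insert_iff, Set.mem_singleton_iff]
    constructor
    · intro hx
      rcases hCdart v x hx with ⟨d, hd, h1, h2⟩ | ⟨d, hd, h1, h2⟩
      · left; rw [← h2, hfstU d hd dO hdO (h1.trans hdOv.symm)]
      · right; rw [← h1, hsndU d hd dI hdI (h2.trans hdIv.symm)]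
    · intro hx
      rcases hx with rfl | rfl
      · rw [hCadj]
        exact List.mem_map.mpr ⟨dO, hdO, by rw [← hdOv]; rfl⟩
      · rw [hCadj]
        refine List.mem_map.mpr ⟨dI, hdI, ?_⟩
        rw [← hdIv]
        show s(dI.fst, dI.snd) = s(dI.snd, dI.fst)
        exact Sym2.eq_swap
  -- IsCycles
  have hCyc : C.IsCycles := by
    intro v hvne
    obtain ⟨x, hx⟩ := hvne
    have hv : v ∈ c.support := hCmem v x hx
    obtain ⟨dO, _, dI, _, _, _, hne', hset⟩ := hnbr v hv
    rw [hset]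
    exact Set.ncard_pair hne'
  -- IsAlternating
  have hAlt : C.IsAlternating M0.spanningCoe := by
    intro v w w' hww' hvw hvw'
    have hv : v ∈ c.support := hCmem v w hvw
    obtain ⟨dO, hdO, dI, hdI, hdOv, hdIv, hne', hset⟩ := hnbr v hv
    have hmO : M0.spanningCoe.Adj v dO.snd ↔ v ∈ A := by
      rw [Subgraph.spanningCoe_adj, ← hdOv]
      exact (hcd dO hdO).2
    have hmI : M0.spanningCoe.Adj v dI.fst ↔ v ∉ A := by
      rw [Subgraph.spanningCoe_adj]
      have h1 : M0.Adj dI.fst v ↔ dI.fst ∈ A := hdIv ▸ (hcd dI hdI).2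
      have h2 : dI.fst ∈ A ↔ v ∉ A := hside _ _ (hdIv ▸ dI.adj)
      constructor
      · intro h; exact h2.mp (h1.mp h.symm)
      · intro h; exact (h1.mpr (h2.mpr h)).symm
    have hw : w ∈ C.neighborSet v := hvw
    have hw' : w' ∈ C.neighborSet v := hvw'
    rw [hset] at hw hw'
    simp only [Set.mem_insert_iff, Set.mem_singleton_iff] at hw hw'
    rcases hw with hw | hw <;> rcases hw' with hw' | hw'
    · exact absurd (hw.trans hw'.symm) hww'
    · simp only [hw, hw', hmO, hmI]; all_goals tauto
    · simp only [hw, hw', hmO, hmI]; all_goals tauto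
    · exact absurd (hw.trans hw'.symm) hww'
  -- assemble
  have hCle : C ≤ G := c.toSubgraph.spanningCoe_le
  have hle : M0.spanningCoe ∆ C ≤ G :=
    symmDiff_le_sup.trans (sup_le M0.spanningCoe_le hCle)
  have hPM' := Subgraph.IsPerfectMatching.symmDiff_of_isAlternating hM0 hAlt hCyc
  set N : G.Subgraph := SimpleGraph.toSubgraph (M0.spanningCoe ∆ C) hle with hN_def
  have hNadj : ∀ x y : V, N.Adj x y ↔ (M0.spanningCoe ∆ C).Adj x y := fun x y => Iff.rfl
  have hNPM : N.IsPerfectMatching := by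
    rw [Subgraph.isPerfectMatching_iff]
    rw [Subgraph.isPerfectMatching_iff] at hPM'
    intro v
    exact hPM' v
  have hCa1b1 : C.Adj a1 b1 := by
    rw [hCadj]
    have : (⟨(a1, b1), hadj⟩ : G.Dart) ∈ c.darts := by
      rw [hc_def, Walk.darts_cons]; exact List.mem_cons_self
    exact List.mem_map.mpr ⟨_, this, rfl⟩
  have hCe2 : ∀ x y : V, s(x, y) = e2 → ¬ C.Adj x y := by
    intro x y hxy hC
    rw [hCadj] at hC
    obtain ⟨d, hd, hde⟩ := List.mem_map.mp hC
    have h1 : s(d.fst, d.snd) = s(x, y) := hde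
    exact (hcd d hd).1 (h1.trans hxy)
  refine ⟨N, hNPM, ?_, ?_⟩
  · rw [Subgraph.mem_edgeSet, hNadj]
    simp only [symmDiff_def, sup_adj, sdiff_adj, Subgraph.spanningCoe_adj]
    push_neg
    exact ⟨fun _ => hCa1b1, fun _ => hm01⟩
  · have hex : ∃ x y, e2 = s(x, y) := by
      induction e2 using Sym2.ind with | _ x y => exact ⟨x, y, rfl⟩
    obtain ⟨x2, y2, rfl⟩ := hex
    have hm02 : M0.Adj x2 y2 := he2
    rw [Subgraph.mem_edgeSet, hNadj]
    simp only [symmDiff_def, sup_adj, sdiff_adj, Subgraph.spanningCoe_adj]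
    exact Or.inl ⟨hm02, hCe2 x2 y2 rfl⟩

/-- In a bipartite matching covered graph `G` with bipartition `(A, B)`,
two distinct mutually dependent edges `e1, e2` form a 2-edge-cut separating `G` into two
balanced parts. -/
theorem stmt4 {V : Type*} [Fintype V] (G : SimpleGraph V)
    (A B : Set V) (hdisj : Disjoint A B) (hcover : A ∪ B = Set.univ)
    (hbip : ∀ x y : V, G.Adj x y → (x ∈ A ∧ y ∈ B) ∨ (x ∈ B ∧ y ∈ A))
    (hmc : MatchingCovered G)
    (e1 e2 : Sym2 V) (hne : e1 ≠ e2) (hdep : MutuallyDependent G e1 e2) :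
    ∃ X : Set V, X.Nonempty ∧ X ≠ Set.univ ∧
      cutEdges G X = {e1, e2} ∧
      (X ∩ A).ncard = (X ∩ B).ncard ∧ (Xᶜ ∩ A).ncard = (Xᶜ ∩ B).ncard := by
  classical
  obtain ⟨hconn, -, hcov⟩ := hmc
  have hB : B = Aᶜ := by
    ext x
    constructor
    · intro hx hxA
      exact (Set.disjoint_left.mp hdisj) hxA hx
    · intro hx
      rcases (hcover ▸ Set.mem_univ x : x ∈ A ∪ B) with h | h
      · exact absurd h hx
      · exact h
  subst hB
  have hside : ∀ x y, G.Adj x y → (x ∈ A ↔ y ∉ A) := by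
    intro x y h
    rcases hbip x y h with ⟨h1, h2⟩ | ⟨h1, h2⟩
    · exact ⟨fun _ => h2, fun _ => h1⟩
    · exact ⟨fun hx => absurd hx h1, fun hy => absurd h2 hy⟩
  -- endpoints
  have key : ∀ e : Sym2 V, e ∈ G.edgeSet → ∃ a b, e = s(a, b) ∧ G.Adj a b ∧ a ∈ A := by
    intro e
    induction e using Sym2.ind with
    | _ x y =>
      intro he
      have hxy : G.Adj x y := he
      by_cases hx : x ∈ A
      · exact ⟨x, y, rfl, hxy, hx⟩
      · exact ⟨y, x, Sym2.eq_swap, hxy.symm,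
          not_not.mp (fun hy => hx ((hside x y hxy).mpr hy))⟩
  obtain ⟨a1, b1, he1, hadj1, ha1A⟩ := key e1 hdep.1
  obtain ⟨a2, b2, he2, hadj2, ha2A⟩ := key e2 hdep.2.1
  have hb1A : b1 ∉ A := (hside _ _ hadj1).mp ha1A
  have hb2A : b2 ∉ A := (hside _ _ hadj2).mp ha2A
  -- M0 : a perfect matching containing both e1 and e2
  obtain ⟨M0, hM0, hm01'⟩ := hcov e1 hdep.1
  have hm02' : e2 ∈ M0.edgeSet := (hdep.2.2 M0 hM0).mp hm01'
  have hm01 : M0.Adj a1 b1 := by rw [he1] at hm01'; exact hm01'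
  have hm02 : M0.Adj a2 b2 := by rw [he2] at hm02'; exact hm02'
  -- uniqueness of partners
  have puniq : ∀ (M : G.Subgraph), M.IsPerfectMatching →
      ∀ v w w', M.Adj v w → M.Adj v w' → w = w' := by
    intro M hM v w w' h h'
    obtain ⟨u, _, hu2⟩ := hM.1 (hM.2 v)
    rw [hu2 w h, hu2 w' h']
  -- distinctness
  have ha12 : a1 ≠ a2 := by
    rintro rfl
    exact hne (by rw [he1, he2, puniq M0 hM0 a1 b1 b2 hm01 hm02])
  have hb12 : b1 ≠ b2 := by
    rintro rfl
    exact hne (by rw [he1, he2, puniq M0 hM0 b1 a1 a2 hm01.symm hm02.symm])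
  have hab12 : a1 ≠ b2 := fun h => hb2A (h ▸ ha1A)
  have hab21 : a2 ≠ b1 := fun h => hb1A (h ▸ ha2A)
  have hsne2 : s(a1, b1) ≠ e2 := by
    rw [he2]
    intro h
    rcases Sym2.eq_iff.mp h with ⟨h1, _⟩ | ⟨h1, _⟩
    · exact ha12 h1
    · exact hab12 h1
  have hsne1 : s(a2, b2) ≠ e1 := by
    rw [he1]
    intro h
    rcases Sym2.eq_iff.mp h with ⟨h1, _⟩ | ⟨h1, _⟩
    · exact ha12 h1.symm
    · exact hab21 h1
  -- a perfect matching M1 avoiding both e1 and e2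
  have hM1ex : ∃ M1 : G.Subgraph, M1.IsPerfectMatching ∧
      e1 ∉ M1.edgeSet ∧ e2 ∉ M1.edgeSet := by
    have hedge : ∃ x y : V, G.Adj x y ∧ s(x, y) ≠ e1 ∧ (x = a1 ∨ x = b1) := by
      by_contra hno
      push_neg at hno
      have hN1 : ∀ y, G.Adj a1 y → y = b1 := by
        intro y hy
        have hh := hno a1 y hy
        have h2 : s(a1, y) = e1 := by
          by_contra hc
          exact (hh hc).1 rfl
        rw [he1] at h2
        rcases Sym2.eq_iff.mp h2 with ⟨_, h4⟩ | ⟨h3, h4⟩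
        · exact h4
        · exact h4.trans h3
      have hN2 : ∀ y, G.Adj b1 y → y = a1 := by
        intro y hy
        have hh := hno b1 y hy
        have h2 : s(b1, y) = e1 := by
          by_contra hc
          exact (hh hc).2 rfl
        rw [he1] at h2
        rcases Sym2.eq_iff.mp h2 with ⟨h3, h4⟩ | ⟨_, h4⟩
        · exact h4.trans h3
        · exact h4
      have hwk : ∀ (u x : V) (w : G.Walk u x), u = a1 ∨ u = b1 → x = a1 ∨ x = b1 := by
        intro u x w
        induction w with
        | nil => exact id
        | cons h q ih =>
          rintro (rfl | rfl)
          · exact ih (Or.inr (hN1 _ h))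
          · exact ih (Or.inl (hN2 _ h))
      obtain ⟨w⟩ := hconn.preconnected a1 a2
      rcases hwk a1 a2 w (Or.inl rfl) with h | h
      · exact ha12 h.symm
      · exact hab21 h
    obtain ⟨x, y, hxy, hxyne1, hx⟩ := hedge
    obtain ⟨M1, hM1, hfM1⟩ := hcov s(x, y) hxy
    refine ⟨M1, hM1, ?_, ?_⟩
    · intro he1M
      have hM1xy : M1.Adj x y := hfM1
      rcases hx with rfl | rfl
      · have h1 : M1.Adj x b1 := by rw [he1] at he1M; exact he1M
        exact hxyne1 (by rw [he1, puniq M1 hM1 x y b1 hM1xy h1])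
      · have h1 : M1.Adj x a1 := by rw [he1] at he1M; exact he1M.symm
        exact hxyne1 (by
          rw [he1, puniq M1 hM1 x y a1 hM1xy h1]
          exact Sym2.eq_swap)
    · intro he2M
      have he1M := (hdep.2.2 M1 hM1).mpr he2M
      have hM1xy : M1.Adj x y := hfM1
      rcases hx with rfl | rfl
      · have h1 : M1.Adj x b1 := by rw [he1] at he1M; exact he1M
        exact hxyne1 (by rw [he1, puniq M1 hM1 x y b1 hM1xy h1])
      · have h1 : M1.Adj x a1 := by rw [he1] at he1M; exact he1M.symm
        exact hxyne1 (by
          rw [he1, puniq M1 hM1 x y a1 hM1xy h1]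
          exact Sym2.eq_swap)
  obtain ⟨M1, hM1, hM1e1, hM1e2⟩ := hM1ex
  -- the shore X
  set Arc : V → V → Prop := fun u v => G.Adj u v ∧ GoodDart G M0 A e2 u v with hArc_def
  set X : Set V := {v | Relation.ReflTransGen Arc b1 v} with hX_def
  have hb1X : b1 ∈ X := Relation.ReflTransGen.refl
  have hclosure : ∀ u ∈ X, ∀ v, G.Adj u v → s(u, v) ≠ e2 →
      (M0.Adj u v ↔ u ∈ A) → v ∈ X := by
    intro u hu v h1 h2 h3
    exact Relation.ReflTransGen.tail hu ⟨h1, h2, h3⟩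
  have ha1X : a1 ∉ X := by
    intro h
    obtain ⟨M, hM, hMne, hMe2⟩ := exchange hside hM0 hm01 ha1A hm02' hsne2 h
    exact hMne (by rw [← he1]; exact (hdep.2.2 M hM).mpr hMe2)
  -- the last step into a vertex of X ∩ Aᶜ comes from its M0-partner
  have hlast : ∀ v ∈ X, v ≠ b1 →
      ∃ u ∈ X, G.Adj u v ∧ s(u, v) ≠ e2 ∧ (M0.Adj u v ↔ u ∈ A) := by
    intro v hv hvb1
    rcases Relation.ReflTransGen.cases_tail hv with h | ⟨c, hc1, hc2⟩
    · exact absurd h hvb1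
    · exact ⟨c, hc1, hc2.1, hc2.2.1, hc2.2.2⟩
  have hinB : ∀ v ∈ X, v ∉ A → v ≠ b1 → ∀ w, M0.Adj v w → w ∈ X := by
    intro v hv hvA hvb1 w hw
    obtain ⟨u, huX, hu1, _, hu3⟩ := hlast v hv hvb1
    have huA : u ∈ A := (hside u v hu1).mpr hvA
    have : M0.Adj u v := hu3.mpr huA
    rwa [puniq M0 hM0 v w u hw this.symm]
  have hb2X : b2 ∉ X := by
    intro h
    obtain ⟨u, _, hu1, hu2, hu3⟩ := hlast b2 h hb12.symm
    have huA : u ∈ A := (hside u b2 hu1).mpr hb2A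
    have hM0u : M0.Adj u b2 := hu3.mpr huA
    have : u = a2 := puniq M0 hM0 b2 u a2 hM0u.symm hm02.symm
    rw [this] at hu2
    exact hu2 he2.symm
  -- partner functions
  have partnerF : ∀ (M : G.Subgraph), M.IsPerfectMatching →
      ∃ m : V → V, (∀ v, M.Adj v (m v)) ∧ (∀ v w, M.Adj v w → w = m v) := by
    intro M hM
    exact ⟨fun v => (hM.1 (hM.2 v)).choose,
      fun v => (hM.1 (hM.2 v)).choose_spec.1,
      fun v w h => (hM.1 (hM.2 v)).choose_spec.2 w h⟩
  obtain ⟨m0, hm0a, hm0u⟩ := partnerF M0 hM0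
  obtain ⟨m1, hm1a, hm1u⟩ := partnerF M1 hM1
  have hm0inv : ∀ v, m0 (m0 v) = v := fun v => (hm0u _ _ (hm0a v).symm).symm
  have hm1inv : ∀ v, m1 (m1 v) = v := fun v => (hm1u _ _ (hm1a v).symm).symm
  have hm0side : ∀ v, v ∈ A ↔ m0 v ∉ A := fun v => hside _ _ (M0.adj_sub (hm0a v))
  have hm1side : ∀ v, v ∈ A ↔ m1 v ∉ A := fun v => hside _ _ (M1.adj_sub (hm1a v))
  have hm0a1 : m0 a1 = b1 := (hm0u a1 b1 hm01).symm
  have hm0b1 : m0 b1 = a1 := (hm0u b1 a1 hm01.symm).symm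
  have hm0a2 : m0 a2 = b2 := (hm0u a2 b2 hm02).symm
  have hm0b2 : m0 b2 = a2 := (hm0u b2 a2 hm02.symm).symm
  -- step along a matching edge out of a non-A vertex of X
  have hBstep : ∀ (M : G.Subgraph) (m : V → V),
      (∀ v, M.Adj v (m v)) →
      (e2 ∉ M.edgeSet ∨ a2 ∈ X) →
      ∀ b ∈ X, b ∉ A → b ≠ b1 → m b ∈ X := by
    intro M m hma hMor b hbX hbA hbb1
    by_cases hM0b : M0.Adj b (m b)
    · exact hinB b hbX hbA hbb1 (m b) hM0b
    · by_cases hs2 : s(b, m b) = e2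
      · rw [he2] at hs2
        rcases Sym2.eq_iff.mp hs2 with ⟨h1, _⟩ | ⟨h1, h2⟩
        · exact absurd (h1 ▸ ha2A) hbA
        · rcases hMor with hMe2 | ha2X
          · exfalso
            apply hMe2
            have hthis := (hma b).symm
            rw [h2, h1] at hthis
            rw [he2]
            exact hthis
          · rw [h2]; exact ha2X
      · exact hclosure b hbX (m b) (M.adj_sub (hma b)) hs2
          ⟨fun h => absurd h hM0b, fun h => absurd h hbA⟩
  -- full version : also covers b = b1, provided e1 ∉ M
  have hBfull : ∀ (M : G.Subgraph) (m : V → V),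
      (∀ v, M.Adj v (m v)) →
      e1 ∉ M.edgeSet → (e2 ∉ M.edgeSet ∨ a2 ∈ X) →
      ∀ b ∈ X, b ∉ A → m b ∈ X := by
    intro M m hma hMe1 hMor b hbX hbA
    by_cases hbb1 : b = b1
    · subst hbb1
      by_cases hM0b : M0.Adj b (m b)
      · exfalso
        have h' : m b = m0 b := hm0u b (m b) hM0b
        rw [hm0b1] at h'
        apply hMe1
        rw [he1]
        exact (h' ▸ (hma b)).symm
      · by_cases hs2 : s(b, m b) = e2
        · exfalso
          rw [he2] at hs2
          rcases Sym2.eq_iff.mp hs2 with ⟨h1, _⟩ | ⟨h1, _⟩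
          · exact hb1A (h1 ▸ ha2A)
          · exact hb12 h1
        · exact hclosure b hbX (m b) (M.adj_sub (hma b)) hs2
            ⟨fun h => absurd h hM0b, fun h => absurd h hbA⟩
    · exact hBstep M m hma hMor b hbX hbA hbb1
  -- stepping along M0 from an A-vertex of X other than a2
  have hAstep : ∀ a ∈ X, a ∈ A → a ≠ a2 → m0 a ∈ X := by
    intro a haX haA hane
    have hs2 : s(a, m0 a) ≠ e2 := by
      rw [he2]
      intro h
      rcases Sym2.eq_iff.mp h with ⟨h1, _⟩ | ⟨h1, _⟩
      · exact hane h1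
      · exact hb2A (h1 ▸ haA)
    exact hclosure a haX (m0 a) (M0.adj_sub (hm0a a)) hs2
      ⟨fun _ => haA, fun _ => hm0a a⟩
  have hm0ne_b1 : ∀ a ∈ X, m0 a ≠ b1 := by
    intro a haX h
    have : a = a1 := by rw [← hm0inv a, h, hm0b1]
    exact ha1X (this ▸ haX)
  have hm1X : ∀ b ∈ X, b ∉ A → m1 b ∈ X :=
    hBfull M1 m1 hm1a hM1e1 (Or.inl hM1e2)
  -- a2 ∈ X
  have ha2X : a2 ∈ X := by
    by_contra ha2X
    have hc1 : (X ∩ A).ncard ≤ ((X ∩ Aᶜ) \ {b1}).ncard := by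
      apply Set.ncard_le_ncard_of_injOn m0
      · rintro a ⟨haX, haA⟩
        have hane : a ≠ a2 := fun h => ha2X (h ▸ haX)
        exact ⟨⟨hAstep a haX haA hane, (hm0side a).mp haA⟩, hm0ne_b1 a haX⟩
      · intro x _ y _ hxy
        rw [← hm0inv x, hxy, hm0inv]
    have hc2 : ((X ∩ Aᶜ) \ {b1}).ncard < (X ∩ Aᶜ).ncard :=
      Set.ncard_diff_singleton_lt_of_mem ⟨hb1X, hb1A⟩ (Set.toFinite _)
    have hc3 : (X ∩ Aᶜ).ncard ≤ (X ∩ A).ncard := by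
      apply Set.ncard_le_ncard_of_injOn m1
      · rintro b ⟨hbX, hbA⟩
        refine ⟨hm1X b hbX hbA, ?_⟩
        exact not_not.mp (fun h => hbA ((hm1side b).mpr h))
      · intro x _ y _ hxy
        rw [← hm1inv x, hxy, hm1inv]
    omega
  -- balance on X
  have hbal : (X ∩ A).ncard = (X ∩ Aᶜ).ncard := by
    have hc1 : ((X ∩ A) \ {a2}).ncard ≤ ((X ∩ Aᶜ) \ {b1}).ncard := by
      apply Set.ncard_le_ncard_of_injOn m0
      · rintro a ⟨⟨haX, haA⟩, hane⟩
        simp only [Set.mem_singleton_iff] at hane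
        exact ⟨⟨hAstep a haX haA hane, (hm0side a).mp haA⟩, hm0ne_b1 a haX⟩
      · intro x _ y _ hxy
        rw [← hm0inv x, hxy, hm0inv]
    have hc2 : ((X ∩ Aᶜ) \ {b1}).ncard ≤ ((X ∩ A) \ {a2}).ncard := by
      apply Set.ncard_le_ncard_of_injOn m0
      · rintro b ⟨⟨hbX, hbA⟩, hbne⟩
        simp only [Set.mem_singleton_iff] at hbne
        refine ⟨⟨hinB b hbX hbA hbne (m0 b) (hm0a b), ?_⟩, ?_⟩
        · exact not_not.mp (fun h => hbA ((hm0side b).mpr h))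
        · simp only [Set.mem_singleton_iff]
          intro h
          have : b = b2 := by rw [← hm0inv b, h, hm0a2]
          exact hb2X (this ▸ hbX)
      · intro x _ y _ hxy
        rw [← hm0inv x, hxy, hm0inv]
    have hd1 : ((X ∩ A) \ {a2}).ncard + 1 = (X ∩ A).ncard :=
      Set.ncard_diff_singleton_add_one ⟨ha2X, ha2A⟩ (Set.toFinite _)
    have hd2 : ((X ∩ Aᶜ) \ {b1}).ncard + 1 = (X ∩ Aᶜ).ncard :=
      Set.ncard_diff_singleton_add_one ⟨hb1X, hb1A⟩ (Set.toFinite _)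
    omega
  -- the cut is exactly {e1, e2}
  have hcut : cutEdges G X = {e1, e2} := by
    ext e
    constructor
    · rintro ⟨heG, x, y, hexy, hxX, hyX⟩
      have hxy : G.Adj x y := by rw [hexy] at heG; exact heG
      obtain ⟨M, hM, heM⟩ := hcov e heG
      obtain ⟨m, hma, hmu⟩ := partnerF M hM
      have hminv : ∀ v, m (m v) = v := fun v => (hmu _ _ (hma v).symm).symm
      have hMxy : M.Adj x y := by rw [hexy] at heM; exact heM
      have hyme : y = m x := hmu x y hMxy
      set SA : Set V := {a : V | a ∈ X ∧ a ∈ A ∧ m a ∉ X} with hSA_def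
      set SB : Set V := {b : V | b ∈ X ∧ b ∉ A ∧ m b ∉ X} with hSB_def
      have hSBsub : SB ⊆ {b1} := by
        rintro b ⟨hbX, hbA, hmbX⟩
        simp only [Set.mem_singleton_iff]
        by_contra hbb1
        exact hmbX (hBstep M m hma (Or.inr ha2X) b hbX hbA hbb1)
      have hcardAB : ((X ∩ A) \ SA).ncard = ((X ∩ Aᶜ) \ SB).ncard := by
        apply le_antisymm
        · apply Set.ncard_le_ncard_of_injOn m
          · rintro a ⟨⟨haX, haA⟩, haS⟩
            have hmaX : m a ∈ X := by
              by_contra h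
              exact haS ⟨haX, haA, h⟩
            have hmaA : m a ∉ A := (hside a (m a) (M.adj_sub (hma a))).mp haA
            refine ⟨⟨hmaX, hmaA⟩, ?_⟩
            rintro ⟨_, _, hmm⟩
            rw [hminv] at hmm
            exact hmm haX
          · intro x _ y _ hxy'
            rw [← hminv x, hxy', hminv]
        · apply Set.ncard_le_ncard_of_injOn m
          · rintro b ⟨⟨hbX, hbA⟩, hbS⟩
            have hmbX : m b ∈ X := by
              by_contra h
              exact hbS ⟨hbX, hbA, h⟩
            have hmbA : m b ∈ A :=
              not_not.mp (fun h => hbA ((hside b (m b) (M.adj_sub (hma b))).mpr h))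
            refine ⟨⟨hmbX, hmbA⟩, ?_⟩
            rintro ⟨_, _, hmm⟩
            rw [hminv] at hmm
            exact hmm hbX
          · intro x _ y _ hxy'
            rw [← hminv x, hxy', hminv]
      have hSAsub : SA ⊆ X ∩ A := fun a ⟨h1, h2, _⟩ => ⟨h1, h2⟩
      have hSBsub' : SB ⊆ X ∩ Aᶜ := fun b ⟨h1, h2, _⟩ => ⟨h1, h2⟩
      have hq1 : ((X ∩ A) \ SA).ncard + SA.ncard = (X ∩ A).ncard :=
        Set.ncard_diff_add_ncard_of_subset hSAsub (Set.toFinite _)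
      have hq2 : ((X ∩ Aᶜ) \ SB).ncard + SB.ncard = (X ∩ Aᶜ).ncard :=
        Set.ncard_diff_add_ncard_of_subset hSBsub' (Set.toFinite _)
      have hScard : SA.ncard = SB.ncard := by omega
      by_cases hxA : x ∈ A
      · have hxSA : x ∈ SA := ⟨hxX, hxA, by rw [← hyme]; exact hyX⟩
        by_cases he1M : e1 ∈ M.edgeSet
        · have he2M : e2 ∈ M.edgeSet := (hdep.2.2 M hM).mp he1M
          have hMa2 : M.Adj a2 b2 := by rw [he2] at he2M; exact he2M
          have hma2 : m a2 = b2 := (hmu a2 b2 hMa2).symm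
          have ha2SA : a2 ∈ SA := ⟨ha2X, ha2A, by rw [hma2]; exact hb2X⟩
          have hSB1 : SB.ncard ≤ 1 := by
            have := Set.ncard_le_ncard hSBsub (Set.toFinite _)
            simpa using this
          have hxa2 : x = a2 := by
            by_contra hxa2
            have hsub2 : ({x, a2} : Set V) ⊆ SA := by
              rintro z (rfl | rfl)
              · exact hxSA
              · exact ha2SA
            have h2le : 2 ≤ SA.ncard := by
              rw [← Set.ncard_pair hxa2]
              exact Set.ncard_le_ncard hsub2 (Set.toFinite _)
            omega
          have hyb2 : y = b2 := by rw [hyme, hxa2, hma2]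
          right
          rw [hexy, hxa2, hyb2, he2]
          rfl
        · exfalso
          have hSBempty : SB = ∅ := by
            ext b
            simp only [Set.mem_empty_iff_false, iff_false]
            rintro ⟨hbX, hbA, hmbX⟩
            exact hmbX (hBfull M m hma he1M (Or.inr ha2X) b hbX hbA)
          have hSA0 : SA.ncard = 0 := by
            rw [hScard, hSBempty, Set.ncard_empty]
          have hSAe : SA = ∅ := (Set.ncard_eq_zero (Set.toFinite _)).mp hSA0
          rw [hSAe] at hxSA
          exact Set.notMem_empty x hxSA
      · have hxSB : x ∈ SB := ⟨hxX, hxA, by rw [← hyme]; exact hyX⟩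
        have hxb1 : x = b1 := hSBsub hxSB
        subst hxb1
        by_cases hM0y : M0.Adj x y
        · have hya1 : y = a1 := puniq M0 hM0 x y a1 hM0y hm01.symm
          left
          rw [hexy, hya1, he1]
          exact Sym2.eq_swap
        · exfalso
          have hs2 : s(x, y) ≠ e2 := by
            rw [he2]
            intro h
            rcases Sym2.eq_iff.mp h with ⟨h1, _⟩ | ⟨h1, _⟩
            · exact hxA (h1 ▸ ha2A)
            · exact hb12 h1
          exact hyX (hclosure x hxX y hxy hs2
            ⟨fun h => absurd h hM0y, fun h => absurd h hxA⟩)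
    · intro he
      rcases he with rfl | he
      · exact ⟨hdep.1, b1, a1, by rw [he1]; exact Sym2.eq_swap, hb1X, ha1X⟩
      · rw [Set.mem_singleton_iff] at he
        subst he
        exact ⟨hdep.2.1, a2, b2, he2, ha2X, hb2X⟩
  -- balance on the complement
  have hAcard : A.ncard = Aᶜ.ncard := by
    apply le_antisymm
    · apply Set.ncard_le_ncard_of_injOn m0
      · intro a haA
        exact (hm0side a).mp haA
      · intro x _ y _ hxy
        rw [← hm0inv x, hxy, hm0inv]
    · apply Set.ncard_le_ncard_of_injOn m0
      · intro b hbA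
        exact not_not.mp (fun h => hbA ((hm0side b).mpr h))
      · intro x _ y _ hxy
        rw [← hm0inv x, hxy, hm0inv]
  have hceq1 : Xᶜ ∩ A = A \ (X ∩ A) := by
    ext z
    simp only [Set.mem_inter_iff, Set.mem_compl_iff, Set.mem_diff]
    tauto
  have hceq2 : Xᶜ ∩ Aᶜ = Aᶜ \ (X ∩ Aᶜ) := by
    ext z
    simp only [Set.mem_inter_iff, Set.mem_compl_iff, Set.mem_diff]
    tauto
  have hq1 : (A \ (X ∩ A)).ncard + (X ∩ A).ncard = A.ncard :=
    Set.ncard_diff_add_ncard_of_subset Set.inter_subset_right (Set.toFinite _)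
  have hq2 : (Aᶜ \ (X ∩ Aᶜ)).ncard + (X ∩ Aᶜ).ncard = Aᶜ.ncard :=
    Set.ncard_diff_add_ncard_of_subset Set.inter_subset_right (Set.toFinite _)
  have hcbal : (Xᶜ ∩ A).ncard = (Xᶜ ∩ Aᶜ).ncard := by
    rw [hceq1, hceq2]
    omega
  exact ⟨X, ⟨b1, hb1X⟩,
    fun h => ha1X (h.symm ▸ Set.mem_univ a1),
    hcut, hbal, hcbal⟩


end Paper
end

section
/- Let G be a cubic brick. If there exist two edges e and f of G such that G − {e, f} is bipartite, then G − {e, f} is matching covered; consequently G is near-bipartite. -/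
set_option maxHeartbeats 1000000
set_option linter.unusedSectionVars false


namespace Paper

open SimpleGraph

variable {V : Type*}

/-! ### Perfect matching partner infrastructure -/

section PMInfra

variable {G : SimpleGraph V} {M : G.Subgraph}

noncomputable def pf (hM : M.IsPerfectMatching) (v : V) : V :=
  (Subgraph.isPerfectMatching_iff.mp hM v).choose

lemma pf_adj (hM : M.IsPerfectMatching) (v : V) : M.Adj v (pf hM v) :=
  (Subgraph.isPerfectMatching_iff.mp hM v).choose_spec.1

lemma pf_eq (hM : M.IsPerfectMatching) {v w : V} (h : M.Adj v w) : pf hM v = w :=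
  ((Subgraph.isPerfectMatching_iff.mp hM v).choose_spec.2 w h).symm

lemma pf_invol (hM : M.IsPerfectMatching) (v : V) : pf hM (pf hM v) = v :=
  pf_eq hM (pf_adj hM v).symm

lemma pf_gadj (hM : M.IsPerfectMatching) (v : V) : G.Adj v (pf hM v) :=
  M.adj_sub (pf_adj hM v)

lemma pf_ne (hM : M.IsPerfectMatching) (v : V) : pf hM v ≠ v := by
  intro h
  have := pf_gadj hM v
  rw [h] at this
  exact G.loopless.irrefl v this

lemma pf_edge_mem (hM : M.IsPerfectMatching) (v : V) : s(v, pf hM v) ∈ M.edgeSet :=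
  Subgraph.mem_edgeSet.2 (pf_adj hM v)

lemma mem_pf_iff (hM : M.IsPerfectMatching) {v w : V} :
    s(v, w) ∈ M.edgeSet ↔ pf hM v = w := by
  constructor
  · intro h; exact pf_eq hM (Subgraph.mem_edgeSet.1 h)
  · rintro rfl; exact pf_edge_mem hM v

end PMInfra

/-! ### Even cardinality of sets closed under a fixed-point-free involution -/

lemma even_ncard_of_invol [Finite V] :
    ∀ (n : ℕ) (D : Set V) (g : V → V), D.ncard = n →
    (∀ v ∈ D, g v ∈ D) → (∀ v ∈ D, g (g v) = v) → (∀ v ∈ D, g v ≠ v) → Even n := by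
  intro n
  induction n using Nat.strong_induction_on with
  | _ n ih =>
    intro D g hn hmem hinv hne
    rcases eq_or_ne n 0 with h0 | h0
    · simp [h0]
    · have hDne : D.Nonempty := Set.nonempty_of_ncard_ne_zero (by rw [hn]; exact h0)
      obtain ⟨v, hv⟩ := hDne
      have hgv : g v ∈ D := hmem v hv
      have hvgv : v ≠ g v := (hne v hv).symm
      have hsub : ({v, g v} : Set V) ⊆ D := by
        intro z hz
        rcases hz with rfl | hz
        · exact hv
        · simp only [Set.mem_singleton_iff] at hz; exact hz ▸ hgv
      have h2n : 2 ≤ n := by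
        rw [← hn, ← Set.ncard_pair hvgv]
        exact Set.ncard_le_ncard hsub
      set D' := D \ {v, g v} with hD'
      have hcard : D'.ncard = n - 2 := by
        rw [hD', Set.ncard_diff hsub, Set.ncard_pair hvgv, hn]
      have hmem' : ∀ z ∈ D', g z ∈ D' := by
        intro z hz
        obtain ⟨hzD, hz2⟩ := hz
        simp only [Set.mem_insert_iff, Set.mem_singleton_iff, not_or] at hz2
        refine ⟨hmem z hzD, ?_⟩
        simp only [Set.mem_insert_iff, Set.mem_singleton_iff, not_or]
        constructor
        · intro h
          exact hz2.2 (by rw [← hinv z hzD, h])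
        · intro h
          have : g (g z) = g (g v) := by rw [h]
          rw [hinv z hzD, hinv v hv] at this
          exact hz2.1 this
      have hinv' : ∀ z ∈ D', g (g z) = z := fun z hz => hinv z hz.1
      have hne' : ∀ z ∈ D', g z ≠ z := fun z hz => hne z hz.1
      have heven : Even (n - 2) := ih (n - 2) (by omega) D' g hcard hmem' hinv' hne'
      obtain ⟨k, hk⟩ := heven
      exact ⟨k + 1, by omega⟩

/-! ### Dart counting infrastructure -/

section Count

variable [Fintype V] [DecidableEq V]

/-- number of ordered adjacent pairs in `P × Q` -/
def db (K : SimpleGraph V) [DecidableRel K.Adj] (P Q : Finset V) : ℕ :=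
  ((P ×ˢ Q).filter fun p => K.Adj p.1 p.2).card

lemma db_comm (K : SimpleGraph V) [DecidableRel K.Adj] (P Q : Finset V) :
    db K P Q = db K Q P := by
  unfold db
  refine Finset.card_bij (fun p _ => p.swap) ?_ ?_ ?_
  · intro a ha
    simp only [Finset.mem_filter, Finset.mem_product] at ha ⊢
    exact ⟨⟨ha.1.2, ha.1.1⟩, ha.2.symm⟩
  · intro a ha b hb h
    have h1 : a.1 = b.1 := congrArg Prod.snd h
    have h2 : a.2 = b.2 := congrArg Prod.fst h
    exact Prod.ext h1 h2
  · intro b hb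
    refine ⟨b.swap, ?_, by simp⟩
    simp only [Finset.mem_filter, Finset.mem_product] at hb ⊢
    exact ⟨⟨hb.1.2, hb.1.1⟩, hb.2.symm⟩

lemma db_eq_sum (K : SimpleGraph V) [DecidableRel K.Adj] (P Q : Finset V) :
    db K P Q = ∑ v ∈ P, (Q.filter fun w => K.Adj v w).card := by
  unfold db
  rw [Finset.card_eq_sum_card_fiberwise (f := Prod.fst) (t := P)
      (fun x hx => (Finset.mem_product.1 (Finset.mem_filter.1 hx).1).1)]
  refine Finset.sum_congr rfl fun v hv => ?_
  refine Finset.card_bij (fun p _ => p.2) ?_ ?_ ?_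
  · intro a ha
    simp only [Finset.mem_filter, Finset.mem_product] at ha ⊢
    obtain ⟨⟨⟨h1, h2⟩, h3⟩, h4⟩ := ha
    exact ⟨h2, h4 ▸ h3⟩
  · intro a ha b hb h
    simp only [Finset.mem_filter, Finset.mem_product] at ha hb
    exact Prod.ext (ha.2.trans hb.2.symm) h
  · intro b hb
    simp only [Finset.mem_filter] at hb
    refine ⟨(v, b), ?_, rfl⟩
    simp only [Finset.mem_filter, Finset.mem_product]
    exact ⟨⟨⟨hv, hb.1⟩, hb.2⟩, trivial⟩

lemma db_union_right (K : SimpleGraph V) [DecidableRel K.Adj] (P : Finset V) {Q1 Q2 : Finset V}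
    (h : Disjoint Q1 Q2) : db K P (Q1 ∪ Q2) = db K P Q1 + db K P Q2 := by
  simp only [db_eq_sum]
  rw [← Finset.sum_add_distrib]
  refine Finset.sum_congr rfl fun v _ => ?_
  rw [Finset.filter_union, Finset.card_union_of_disjoint (Finset.disjoint_filter_filter h)]

lemma filter_card_of_nbhd_subset (K : SimpleGraph V) [DecidableRel K.Adj] {Q : Finset V} {v : V}
    (h : K.neighborSet v ⊆ ↑Q) : (Q.filter fun w => K.Adj v w).card = (K.neighborSet v).ncard := by
  rw [Set.ncard_eq_toFinset_card _ (Set.toFinite _)]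
  congr 1
  ext w
  simp only [Finset.mem_filter, Set.Finite.mem_toFinset, mem_neighborSet]
  exact ⟨fun h' => h'.2, fun h' => ⟨h h', h'⟩⟩

end Count
section Main

variable [Fintype V]

/-- Normalized context: `A` is a colour class of `G − {e,f}`, `e` has both ends `a1 a2` in `A`,
`f` has both ends `b1 b2` in `Aᶜ`, and the two classes have equal size. -/
structure Setup (G : SimpleGraph V) (e f : Sym2 V) (a1 a2 b1 b2 : V) (A : Set V) : Prop where
  brick : IsBrick G
  cubic : Cubic G
  hef : e ≠ f
  hea : e = s(a1, a2)
  hfb : f = s(b1, b2)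
  he : e ∈ G.edgeSet
  hf : f ∈ G.edgeSet
  ha1 : a1 ∈ A
  ha2 : a2 ∈ A
  hb1 : b1 ∉ A
  hb2 : b2 ∉ A
  hcross : ∀ x y, G.Adj x y → s(x, y) ≠ e → s(x, y) ≠ f → (x ∈ A ↔ y ∉ A)
  cardA : A.ncard = Aᶜ.ncard

namespace Setup

variable {G : SimpleGraph V} {e f : Sym2 V} {a1 a2 b1 b2 : V} {A : Set V}
variable (st : Setup G e f a1 a2 b1 b2 A)
include st

lemma adjE : G.Adj a1 a2 := by
  have h := st.he; rw [st.hea, mem_edgeSet] at h; exact h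

lemma adjF : G.Adj b1 b2 := by
  have h := st.hf; rw [st.hfb, mem_edgeSet] at h; exact h

lemma ne_a : a1 ≠ a2 := st.adjE.ne

lemma ne_b : b1 ≠ b2 := st.adjF.ne

lemma eq_e_cases {x y : V} (h : s(x, y) = e) :
    (x = a1 ∧ y = a2) ∨ (x = a2 ∧ y = a1) := by
  rw [st.hea] at h; exact Sym2.eq_iff.1 h

lemma eq_f_cases {x y : V} (h : s(x, y) = f) :
    (x = b1 ∧ y = b2) ∨ (x = b2 ∧ y = b1) := by
  rw [st.hfb] at h; exact Sym2.eq_iff.1 h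

lemma mono_e {x y : V} (hadj : G.Adj x y) (hx : x ∈ A) (hy : y ∈ A) : s(x, y) = e := by
  by_contra h
  by_cases h2 : s(x, y) = f
  · rcases st.eq_f_cases h2 with ⟨rfl, rfl⟩ | ⟨rfl, rfl⟩
    · exact st.hb1 hx
    · exact st.hb2 hx
  · exact ((st.hcross x y hadj h h2).1 hx) hy

lemma mono_f {x y : V} (hadj : G.Adj x y) (hx : x ∉ A) (hy : y ∉ A) : s(x, y) = f := by
  by_contra h
  by_cases h2 : s(x, y) = e
  · rcases st.eq_e_cases h2 with ⟨rfl, rfl⟩ | ⟨rfl, rfl⟩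
    · exact hx st.ha1
    · exact hx st.ha2
  · exact hx ((st.hcross x y hadj h2 h).2 hy)

lemma hH_adj {x y : V} :
    (G.deleteEdges {e, f}).Adj x y ↔ G.Adj x y ∧ s(x, y) ≠ e ∧ s(x, y) ≠ f := by
  rw [deleteEdges_adj]
  simp only [Set.mem_insert_iff, Set.mem_singleton_iff, not_or]

lemma cross_H {x y : V} (h : (G.deleteEdges {e, f}).Adj x y) : x ∈ A ↔ y ∉ A := by
  rw [st.hH_adj] at h
  exact st.hcross x y h.1 h.2.1 h.2.2

lemma swapE : Setup G e f a2 a1 b1 b2 A where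
  brick := st.brick
  cubic := st.cubic
  hef := st.hef
  hea := by rw [st.hea, Sym2.eq_swap]
  hfb := st.hfb
  he := st.he
  hf := st.hf
  ha1 := st.ha2
  ha2 := st.ha1
  hb1 := st.hb1
  hb2 := st.hb2
  hcross := st.hcross
  cardA := st.cardA

lemma swapF : Setup G e f a1 a2 b2 b1 A where
  brick := st.brick
  cubic := st.cubic
  hef := st.hef
  hea := st.hea
  hfb := by rw [st.hfb, Sym2.eq_swap]
  he := st.he
  hf := st.hf
  ha1 := st.ha1
  ha2 := st.ha2
  hb1 := st.hb2
  hb2 := st.hb1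
  hcross := st.hcross
  cardA := st.cardA

lemma flip : Setup G f e b1 b2 a1 a2 Aᶜ where
  brick := st.brick
  cubic := st.cubic
  hef := st.hef.symm
  hea := st.hfb
  hfb := st.hea
  he := st.hf
  hf := st.he
  ha1 := st.hb1
  ha2 := st.hb2
  hb1 := by simp [st.ha1]
  hb2 := by simp [st.ha2]
  hcross := by
    intro x y hadj h1 h2
    have := st.hcross x y hadj h2 h1
    simp only [Set.mem_compl_iff]
    tauto
  cardA := by rw [compl_compl]; exact st.cardA.symm

lemma nbhdH_a1 : (G.deleteEdges {e, f}).neighborSet a1 = G.neighborSet a1 \ {a2} := by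
  ext y
  simp only [mem_neighborSet, Set.mem_diff, Set.mem_singleton_iff]
  rw [st.hH_adj]
  constructor
  · rintro ⟨hadj, hne, -⟩
    refine ⟨hadj, ?_⟩
    rintro rfl
    exact hne (st.hea.symm)
  · rintro ⟨hadj, hne⟩
    refine ⟨hadj, ?_, ?_⟩
    · intro h
      rcases st.eq_e_cases h with ⟨-, rfl⟩ | ⟨h1, -⟩
      · exact hne rfl
      · exact absurd h1 st.ne_a
    · intro h
      rcases st.eq_f_cases h with ⟨rfl, -⟩ | ⟨rfl, -⟩
      · exact st.hb1 st.ha1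
      · exact st.hb2 st.ha1

lemma ncard_nbhdH_a1 : ((G.deleteEdges {e, f}).neighborSet a1).ncard = 2 := by
  rw [st.nbhdH_a1, Set.ncard_diff (by simpa using st.adjE : ({a2} : Set V) ⊆ G.neighborSet a1),
    st.cubic a1, Set.ncard_singleton]

lemma nbhdH_other {x : V} (h1 : x ≠ a1) (h2 : x ≠ a2) (h3 : x ≠ b1) (h4 : x ≠ b2) :
    (G.deleteEdges {e, f}).neighborSet x = G.neighborSet x := by
  ext y
  simp only [mem_neighborSet]
  rw [st.hH_adj]
  constructor
  · exact fun h => h.1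
  · intro hadj
    refine ⟨hadj, ?_, ?_⟩
    · intro h
      rcases st.eq_e_cases h with ⟨rfl, -⟩ | ⟨rfl, -⟩
      exacts [h1 rfl, h2 rfl]
    · intro h
      rcases st.eq_f_cases h with ⟨rfl, -⟩ | ⟨rfl, -⟩
      exacts [h3 rfl, h4 rfl]

section PM

variable {M : G.Subgraph} (hM : M.IsPerfectMatching)
include hM

lemma pf_e1 (hMe : e ∈ M.edgeSet) : pf hM a1 = a2 := by
  rw [st.hea] at hMe; exact (mem_pf_iff hM).1 hMe

lemma pf_e2 (hMe : e ∈ M.edgeSet) : pf hM a2 = a1 :=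
  pf_eq hM ((Subgraph.mem_edgeSet.1 (st.hea ▸ hMe)).symm)

lemma pf_f1 (hMf : f ∈ M.edgeSet) : pf hM b1 = b2 := by
  rw [st.hfb] at hMf; exact (mem_pf_iff hM).1 hMf

lemma pf_f2 (hMf : f ∈ M.edgeSet) : pf hM b2 = b1 :=
  pf_eq hM ((Subgraph.mem_edgeSet.1 (st.hfb ▸ hMf)).symm)

/-- Mutual dependence: every perfect matching of `G` contains `e` iff it contains `f`. -/
lemma dep : e ∈ M.edgeSet ↔ f ∈ M.edgeSet := by
  classical
  set m := pf hM with hm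
  -- sets of vertices matched within their own class
  set K : Set V := {v | v ∈ A ∧ m v ∈ A} with hK
  set K' : Set V := {v | v ∉ A ∧ m v ∉ A} with hK'
  set AK : Set V := {v | v ∈ A ∧ m v ∉ A} with hAK
  set CK : Set V := {v | v ∉ A ∧ m v ∈ A} with hCK
  have himg : m '' AK = CK := by
    ext y
    constructor
    · rintro ⟨x, ⟨hxA, hxm⟩, rfl⟩
      exact ⟨hxm, by rw [hm, pf_invol hM x]; exact hxA⟩
    · rintro ⟨hyA, hym⟩
      exact ⟨m y, ⟨hym, by rw [hm, pf_invol hM y]; exact hyA⟩, by rw [hm, pf_invol hM y]⟩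
  have hinjm : Set.InjOn m AK := by
    intro x _ y _ hxy
    have := congrArg m hxy
    rwa [hm, pf_invol hM, pf_invol hM] at this
  have hcard1 : AK.ncard = CK.ncard := by rw [← himg, Set.ncard_image_of_injOn hinjm]
  have hsplitA : A.ncard = K.ncard + AK.ncard := by
    rw [← Set.ncard_union_eq (by
      rw [Set.disjoint_left]; rintro v ⟨-, h1⟩ ⟨-, h2⟩; exact h2 h1)]
    congr 1
    ext v
    constructor
    · intro hv
      by_cases h : m v ∈ A
      · exact Or.inl ⟨hv, h⟩
      · exact Or.inr ⟨hv, h⟩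
    · rintro (⟨h, -⟩ | ⟨h, -⟩) <;> exact h
  have hsplitC : Aᶜ.ncard = K'.ncard + CK.ncard := by
    rw [← Set.ncard_union_eq (by
      rw [Set.disjoint_left]; rintro v ⟨-, h1⟩ ⟨-, h2⟩; exact h1 h2)]
    congr 1
    ext v
    simp only [Set.mem_compl_iff]
    constructor
    · intro hv
      by_cases h : m v ∈ A
      · exact Or.inr ⟨hv, h⟩
      · exact Or.inl ⟨hv, h⟩
    · rintro (⟨h, -⟩ | ⟨h, -⟩) <;> exact h
  have hKK' : K.ncard = K'.ncard := by
    have := st.cardA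
    omega
  have hKval : e ∈ M.edgeSet → K = {a1, a2} := by
    intro hMe
    ext v
    simp only [Set.mem_insert_iff, Set.mem_singleton_iff]
    constructor
    · rintro ⟨hvA, hvm⟩
      have hedge : s(v, m v) = e := st.mono_e (pf_gadj hM v) hvA hvm
      rcases st.eq_e_cases hedge with ⟨h, -⟩ | ⟨h, -⟩
      exacts [Or.inl h, Or.inr h]
    · rintro (rfl | rfl)
      · exact ⟨st.ha1, by rw [hm, st.pf_e1 hM hMe]; exact st.ha2⟩
      · exact ⟨st.ha2, by rw [hm, st.pf_e2 hM hMe]; exact st.ha1⟩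
  have hKempty : e ∉ M.edgeSet → K = ∅ := by
    intro hMe
    ext v
    simp only [Set.mem_empty_iff_false, iff_false]
    rintro ⟨hvA, hvm⟩
    have hedge : s(v, m v) = e := st.mono_e (pf_gadj hM v) hvA hvm
    exact hMe (hedge ▸ pf_edge_mem hM v)
  have hK'val : f ∈ M.edgeSet → K' = {b1, b2} := by
    intro hMf
    ext v
    simp only [Set.mem_insert_iff, Set.mem_singleton_iff]
    constructor
    · rintro ⟨hvA, hvm⟩
      have hedge : s(v, m v) = f := st.mono_f (pf_gadj hM v) hvA hvm
      rcases st.eq_f_cases hedge with ⟨h, -⟩ | ⟨h, -⟩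
      exacts [Or.inl h, Or.inr h]
    · rintro (rfl | rfl)
      · exact ⟨st.hb1, by rw [hm, st.pf_f1 hM hMf]; exact st.hb2⟩
      · exact ⟨st.hb2, by rw [hm, st.pf_f2 hM hMf]; exact st.hb1⟩
  have hK'empty : f ∉ M.edgeSet → K' = ∅ := by
    intro hMf
    ext v
    simp only [Set.mem_empty_iff_false, iff_false]
    rintro ⟨hvA, hvm⟩
    have hedge : s(v, m v) = f := st.mono_f (pf_gadj hM v) hvA hvm
    exact hMf (hedge ▸ pf_edge_mem hM v)
  constructor
  · intro hMe
    by_contra hMf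
    rw [hKval hMe] at hKK'
    rw [hK'empty hMf] at hKK'
    rw [Set.ncard_pair st.ne_a, Set.ncard_empty] at hKK'
    omega
  · intro hMf
    by_contra hMe
    rw [hKempty hMe] at hKK'
    rw [hK'val hMf] at hKK'
    rw [Set.ncard_empty, Set.ncard_pair st.ne_b] at hKK'
    omega

end PM

end Setup

end Main
section Cases

variable [Fintype V]

/-- If there is exactly one vertex of `W` matched outside of `W`, then the matching meets
the cut `∂(W)` in exactly one edge. -/
lemma cross_ncard_one {G : SimpleGraph V} {M : G.Subgraph} (hM : M.IsPerfectMatching)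
    {W : Set V} {x0 : V} (h0 : x0 ∈ W) (h1 : pf hM x0 ∉ W)
    (huniq : ∀ x ∈ W, pf hM x ∉ W → x = x0) :
    (M.edgeSet ∩ cutEdges G W).ncard = 1 := by
  have hset : M.edgeSet ∩ cutEdges G W = {s(x0, pf hM x0)} := by
    ext ε
    constructor
    · rintro ⟨hMε, -, x, y, rfl, hxW, hyW⟩
      have hadj : M.Adj x y := Subgraph.mem_edgeSet.1 hMε
      have hy : pf hM x = y := pf_eq hM hadj
      subst hy
      obtain rfl := huniq x hxW hyW
      rfl
    · rintro (rfl : ε = _)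
      exact ⟨pf_edge_mem hM x0,
        (G.mem_edgeSet).2 (pf_gadj hM x0), x0, pf hM x0, rfl, h0, h1⟩
  rw [hset, Set.ncard_singleton]

namespace Setup

variable {G : SimpleGraph V} {e f : Sym2 V} {a1 a2 b1 b2 : V} {A : Set V}
variable {S T : Set V} {M : G.Subgraph}
variable (st : Setup G e f a1 a2 b1 b2 A)
include st

lemma pfInj (hM : M.IsPerfectMatching) : Function.Injective (pf hM) := by
  intro x y h
  have := congrArg (pf hM) h
  rwa [pf_invol hM, pf_invol hM] at this

section PMHelpers

variable (hM : M.IsPerfectMatching)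
variable (hclose : ∀ x ∈ S, ∀ y, (G.deleteEdges {e, f}).Adj x y → y ∈ T)
include hM hclose

lemma mS_not (hMe : e ∉ M.edgeSet) : ∀ x ∈ S, pf hM x ∈ T := by
  intro x hx
  have hMf : f ∉ M.edgeSet := fun h => hMe ((st.dep hM).2 h)
  apply hclose x hx
  rw [st.hH_adj]
  refine ⟨pf_gadj hM x, ?_, ?_⟩ <;> intro h
  · exact hMe (h ▸ pf_edge_mem hM x)
  · exact hMf (h ▸ pf_edge_mem hM x)

lemma mImg_not (hTS : T.ncard = S.ncard) (hMe : e ∉ M.edgeSet) :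
    pf hM '' S = T := by
  refine Set.eq_of_subset_of_ncard_le ?_ ?_ (Set.toFinite _)
  · rintro y ⟨x, hx, rfl⟩
    exact st.mS_not hM hclose hMe x hx
  · rw [Set.ncard_image_of_injOn ((st.pfInj hM).injOn)]
    exact hTS.le

lemma mT_not (hTS : T.ncard = S.ncard) (hMe : e ∉ M.edgeSet) :
    ∀ y ∈ T, pf hM y ∈ S := by
  intro y hy
  rw [← st.mImg_not hM hclose hTS hMe] at hy
  obtain ⟨x, hx, hxy⟩ := hy
  rw [← hxy, pf_invol]
  exact hx

lemma mS_mem (hS : S ⊆ A) (hMe : e ∈ M.edgeSet) :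
    ∀ x ∈ S, x ≠ a1 → x ≠ a2 → pf hM x ∈ T := by
  intro x hx hx1 hx2
  apply hclose x hx
  rw [st.hH_adj]
  refine ⟨pf_gadj hM x, ?_, ?_⟩ <;> intro h
  · rcases st.eq_e_cases h with ⟨h', -⟩ | ⟨h', -⟩
    exacts [hx1 h', hx2 h']
  · rcases st.eq_f_cases h with ⟨h', -⟩ | ⟨h', -⟩
    · exact st.hb1 (h' ▸ hS hx)
    · exact st.hb2 (h' ▸ hS hx)

lemma mT_mem (hT : T ⊆ Aᶜ) :
    ∀ y ∈ T, y ≠ b1 → y ≠ b2 →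
      (G.deleteEdges {e, f}).Adj y (pf hM y) ∧ pf hM y ∈ A := by
  intro y hy hy1 hy2
  have hyA : y ∉ A := hT hy
  have hHadj : (G.deleteEdges {e, f}).Adj y (pf hM y) := by
    rw [st.hH_adj]
    refine ⟨pf_gadj hM y, ?_, ?_⟩ <;> intro h
    · rcases st.eq_e_cases h with ⟨h', -⟩ | ⟨h', -⟩
      · exact hyA (h' ▸ st.ha1)
      · exact hyA (h' ▸ st.ha2)
    · rcases st.eq_f_cases h with ⟨h', -⟩ | ⟨h', -⟩
      exacts [hy1 h', hy2 h']
  refine ⟨hHadj, ?_⟩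
  by_contra h
  exact hyA ((st.cross_H hHadj).2 h)

end PMHelpers

section CaseLemmas

variable (hS : S ⊆ A) (hSne : S.Nonempty) (hSA : S ≠ A) (hT : T ⊆ Aᶜ)
  (hTS : T.ncard = S.ncard)
  (hclose : ∀ x ∈ S, ∀ y, (G.deleteEdges {e, f}).Adj x y → y ∈ T)
include hS hSne hSA hT hTS hclose

lemma caseC01 (h2 : a1 ∉ S) (h3 : a2 ∉ S) (h4 : b2 ∈ T) : False := by
  obtain ⟨M, hM, hMe⟩ := st.brick.1.2.2 e st.he
  have hMf : f ∈ M.edgeSet := (st.dep hM).1 hMe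
  have hsub : pf hM '' S ⊆ T \ {b2} := by
    rintro y ⟨x, hx, rfl⟩
    refine ⟨st.mS_mem hM hclose hS hMe x hx (fun h => h2 (h ▸ hx)) (fun h => h3 (h ▸ hx)), ?_⟩
    simp only [Set.mem_singleton_iff]
    intro h
    have hx1 : x = b1 := by
      have := congrArg (pf hM) h
      rwa [pf_invol, st.pf_f2 hM hMf] at this
    exact st.hb1 (hx1 ▸ hS hx)
  have h5 : (pf hM '' S).ncard = S.ncard := Set.ncard_image_of_injOn ((st.pfInj hM).injOn)
  have h6 : (T \ {b2}).ncard = T.ncard - 1 := by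
    rw [Set.ncard_diff (by simpa using h4) (Set.toFinite _), Set.ncard_singleton]
  have h7 : (pf hM '' S).ncard ≤ (T \ {b2}).ncard := Set.ncard_le_ncard hsub
  have h8 : 0 < S.ncard := (Set.ncard_pos (Set.toFinite _)).2 hSne
  omega

lemma caseC12 (h1 : a1 ∈ S) (h2 : a2 ∉ S) (h3 : b1 ∈ T) (h4 : b2 ∈ T) : False := by
  obtain ⟨M, hM, hMe⟩ := st.brick.1.2.2 e st.he
  have hMf : f ∈ M.edgeSet := (st.dep hM).1 hMe
  have hsub : pf hM '' (S \ {a1}) ⊆ T \ {b1, b2} := by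
    rintro y ⟨x, ⟨hx, hx1⟩, rfl⟩
    simp only [Set.mem_singleton_iff] at hx1
    refine ⟨st.mS_mem hM hclose hS hMe x hx hx1 (fun h => h2 (h ▸ hx)), ?_⟩
    simp only [Set.mem_insert_iff, Set.mem_singleton_iff, not_or]
    constructor <;> intro h
    · have hx' : x = b2 := by
        have := congrArg (pf hM) h
        rwa [pf_invol, st.pf_f1 hM hMf] at this
      exact st.hb2 (hx' ▸ hS hx)
    · have hx' : x = b1 := by
        have := congrArg (pf hM) h
        rwa [pf_invol, st.pf_f2 hM hMf] at this
      exact st.hb1 (hx' ▸ hS hx)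
  have h5 : (pf hM '' (S \ {a1})).ncard = S.ncard - 1 := by
    rw [Set.ncard_image_of_injOn ((st.pfInj hM).injOn),
      Set.ncard_diff (by simpa using h1) (Set.toFinite _), Set.ncard_singleton]
  have h6 : (T \ {b1, b2}).ncard = T.ncard - 2 := by
    rw [Set.ncard_diff (by
      intro z hz
      rcases hz with rfl | hz
      · exact h3
      · simp only [Set.mem_singleton_iff] at hz; exact hz ▸ h4) (Set.toFinite _), Set.ncard_pair st.ne_b]
  have h7 : (pf hM '' (S \ {a1})).ncard ≤ (T \ {b1, b2}).ncard := Set.ncard_le_ncard hsub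
  have h8 : 2 ≤ T.ncard := by
    rw [← Set.ncard_pair st.ne_b]
    refine Set.ncard_le_ncard ?_ (Set.toFinite _)
    intro z hz
    rcases hz with rfl | hz
    · exact h3
    · simp only [Set.mem_singleton_iff] at hz; exact hz ▸ h4
  omega

lemma caseC00 (h1 : a1 ∉ S) (h2 : a2 ∉ S) (h3 : b1 ∉ T) (h4 : b2 ∉ T) : False := by
  have key : ∀ (M : G.Subgraph) (hM : M.IsPerfectMatching), ∀ x ∈ S, pf hM x ∈ T := by
    intro M hM x hx
    by_cases hMe : e ∈ M.edgeSet
    · exact st.mS_mem hM hclose hS hMe x hx (fun h => h1 (h ▸ hx)) (fun h => h2 (h ▸ hx))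
    · exact st.mS_not hM hclose hMe x hx
  have keyT : ∀ (M : G.Subgraph) (hM : M.IsPerfectMatching), ∀ y ∈ T, pf hM y ∈ S := by
    intro M hM y hy
    have himg : pf hM '' S = T := by
      refine Set.eq_of_subset_of_ncard_le ?_ ?_ (Set.toFinite _)
      · rintro z ⟨x, hx, rfl⟩; exact key M hM x hx
      · rw [Set.ncard_image_of_injOn ((st.pfInj hM).injOn)]; exact hTS.le
    rw [← himg] at hy
    obtain ⟨x, hx, hxy⟩ := hy
    rw [← hxy, pf_invol]
    exact hx
  -- a boundary edge of S ∪ T exists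
  obtain ⟨x1, hx1⟩ := hSne
  have ha2T : a2 ∉ S ∪ T := by
    rintro (h | h)
    exacts [h2 h, hT h st.ha2]
  obtain ⟨p⟩ := st.brick.1.1.preconnected x1 a2
  obtain ⟨d, -, hd1, hd2⟩ := p.exists_boundary_dart (S ∪ T) (Or.inl hx1) ha2T
  obtain ⟨M, hM, hMd⟩ := st.brick.1.2.2 s(d.toProd.1, d.toProd.2) ((G.mem_edgeSet).2 d.adj)
  have hpf : pf hM d.toProd.1 = d.toProd.2 := (mem_pf_iff hM).1 hMd
  rcases hd1 with hd1 | hd1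
  · exact hd2 (Or.inr (hpf ▸ key M hM _ hd1))
  · exact hd2 (Or.inl (hpf ▸ keyT M hM _ hd1))

lemma caseC22 (h1 : a1 ∈ S) (h2 : a2 ∈ S) (h3 : b1 ∈ T) (h4 : b2 ∈ T) : False := by
  obtain ⟨z, hzA, hzS⟩ := Set.exists_of_ssubset (ssubset_of_subset_of_ne hS hSA)
  have hzST : z ∉ S ∪ T := by
    rintro (h | h)
    exacts [hzS h, hT h hzA]
  obtain ⟨x1, hx1⟩ := hSne
  obtain ⟨p⟩ := st.brick.1.1.preconnected x1 z
  obtain ⟨d, -, hd1, hd2⟩ := p.exists_boundary_dart (S ∪ T) (Or.inl hx1) hzST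
  obtain ⟨M, hM, hMd⟩ := st.brick.1.2.2 s(d.toProd.1, d.toProd.2) ((G.mem_edgeSet).2 d.adj)
  have hpf : pf hM d.toProd.1 = d.toProd.2 := (mem_pf_iff hM).1 hMd
  by_cases hMe : e ∈ M.edgeSet
  · have hMf : f ∈ M.edgeSet := (st.dep hM).1 hMe
    have hIsub : pf hM '' (S \ {a1, a2}) ⊆ T \ {b1, b2} := by
      rintro y ⟨x, ⟨hx, hx'⟩, rfl⟩
      simp only [Set.mem_insert_iff, Set.mem_singleton_iff, not_or] at hx'
      refine ⟨st.mS_mem hM hclose hS hMe x hx hx'.1 hx'.2, ?_⟩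
      simp only [Set.mem_insert_iff, Set.mem_singleton_iff, not_or]
      constructor <;> intro h
      · have hx'' : x = b2 := by
          have := congrArg (pf hM) h
          rwa [pf_invol, st.pf_f1 hM hMf] at this
        exact st.hb2 (hx'' ▸ hS hx)
      · have hx'' : x = b1 := by
          have := congrArg (pf hM) h
          rwa [pf_invol, st.pf_f2 hM hMf] at this
        exact st.hb1 (hx'' ▸ hS hx)
    have hpair_S : ({a1, a2} : Set V) ⊆ S := by
      intro z' hz'
      rcases hz' with rfl | hz'
      · exact h1
      · simp only [Set.mem_singleton_iff] at hz'; exact hz' ▸ h2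
    have hpair_T : ({b1, b2} : Set V) ⊆ T := by
      intro z' hz'
      rcases hz' with rfl | hz'
      · exact h3
      · simp only [Set.mem_singleton_iff] at hz'; exact hz' ▸ h4
    have hIeq : pf hM '' (S \ {a1, a2}) = T \ {b1, b2} := by
      refine Set.eq_of_subset_of_ncard_le hIsub ?_ (Set.toFinite _)
      rw [Set.ncard_image_of_injOn ((st.pfInj hM).injOn),
        Set.ncard_diff hpair_S (Set.toFinite _), Set.ncard_diff hpair_T (Set.toFinite _),
        Set.ncard_pair st.ne_a, Set.ncard_pair st.ne_b]
      omega
    rcases hd1 with hd1 | hd1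
    · by_cases hxa : d.toProd.1 = a1
      · apply hd2
        rw [← hpf, hxa, st.pf_e1 hM hMe]
        exact Or.inl h2
      by_cases hxa2 : d.toProd.1 = a2
      · apply hd2
        rw [← hpf, hxa2, st.pf_e2 hM hMe]
        exact Or.inl h1
      · exact hd2 (Or.inr (hpf ▸ st.mS_mem hM hclose hS hMe _ hd1 hxa hxa2))
    · by_cases hxb : d.toProd.1 = b1
      · apply hd2
        rw [← hpf, hxb, st.pf_f1 hM hMf]
        exact Or.inr h4
      by_cases hxb2 : d.toProd.1 = b2
      · apply hd2
        rw [← hpf, hxb2, st.pf_f2 hM hMf]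
        exact Or.inr h3
      · have : d.toProd.1 ∈ pf hM '' (S \ {a1, a2}) := by
          rw [hIeq]
          exact ⟨hd1, by simp [hxb, hxb2]⟩
        obtain ⟨x, hx, hxd⟩ := this
        apply hd2
        rw [← hpf, ← hxd, pf_invol]
        exact Or.inl hx.1
  · rcases hd1 with hd1 | hd1
    · exact hd2 (Or.inr (hpf ▸ st.mS_not hM hclose hMe _ hd1))
    · exact hd2 (Or.inl (hpf ▸ st.mT_not hM hclose hTS hMe _ hd1))

lemma caseC10 (h1 : a1 ∈ S) (h2 : a2 ∉ S) (h3 : b1 ∉ T) (h4 : b2 ∉ T) : False := by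
  have ha1W : a1 ∉ ((S \ {a1}) ∪ T) := by
    rintro (⟨-, h⟩ | h)
    · exact h rfl
    · exact hT h st.ha1
  have ha2W : a2 ∉ ((S \ {a1}) ∪ T) := by
    rintro (⟨h, -⟩ | h)
    · exact h2 h
    · exact hT h st.ha2
  have htight : IsTightCut G ((S \ {a1}) ∪ T) := by
    intro M hM
    by_cases hMe : e ∈ M.edgeSet
    · set I : Set V := pf hM '' (S \ {a1}) with hI
      have hIsub : I ⊆ T := by
        rintro y ⟨x, ⟨hx, hx1⟩, rfl⟩
        simp only [Set.mem_singleton_iff] at hx1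
        exact st.mS_mem hM hclose hS hMe x hx hx1 (fun h => h2 (h ▸ hx))
      have hIcard : I.ncard = S.ncard - 1 := by
        rw [hI, Set.ncard_image_of_injOn ((st.pfInj hM).injOn),
          Set.ncard_diff (by simpa using h1) (Set.toFinite _), Set.ncard_singleton]
      have hS1 : 0 < S.ncard := (Set.ncard_pos (Set.toFinite _)).2 hSne
      have hTI : (T \ I).ncard = 1 := by
        rw [Set.ncard_diff hIsub (Set.toFinite _)]
        omega
      obtain ⟨t0, ht0⟩ := Set.ncard_eq_one.1 hTI
      have ht0m : t0 ∈ T \ I := by rw [ht0]; rfl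
      have ht0T : t0 ∈ T := ht0m.1
      have ht0b1 : t0 ≠ b1 := fun h => h3 (h ▸ ht0T)
      have ht0b2 : t0 ≠ b2 := fun h => h4 (h ▸ ht0T)
      obtain ⟨-, hpA⟩ := st.mT_mem hM hclose hT t0 ht0T ht0b1 ht0b2
      have hpfW : pf hM t0 ∉ ((S \ {a1}) ∪ T) := by
        rintro (⟨hp1, hp1'⟩ | hp2)
        · exact ht0m.2 ⟨pf hM t0, ⟨hp1, hp1'⟩, pf_invol hM t0⟩
        · exact (hT hp2) hpA
      refine cross_ncard_one hM (Or.inr ht0T) hpfW ?_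
      intro x hxW hxm
      rcases hxW with ⟨hxS, hxa1⟩ | hxT
      · simp only [Set.mem_singleton_iff] at hxa1
        exact absurd (Or.inr (st.mS_mem hM hclose hS hMe x hxS hxa1 (fun h => h2 (h ▸ hxS)))) hxm
      · by_cases hxI : x ∈ I
        · obtain ⟨w, hw, hwx⟩ := hxI
          refine absurd (Or.inl ?_) hxm
          rw [← hwx, pf_invol]
          exact hw
        · have hx' : x ∈ T \ I := ⟨hxT, hxI⟩
          rw [ht0] at hx'
          exact hx'
    · have hx0T : pf hM a1 ∈ T := st.mS_not hM hclose hMe a1 h1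
      refine cross_ncard_one hM (Or.inr hx0T) (by rw [pf_invol]; exact ha1W) ?_
      intro x hxW hxm
      rcases hxW with ⟨hxS, -⟩ | hxT
      · exact absurd (Or.inr (st.mS_not hM hclose hMe x hxS)) hxm
      · have hxs : pf hM x ∈ S := st.mT_not hM hclose hTS hMe x hxT
        have hxa : pf hM x = a1 := by
          by_contra h
          exact hxm (Or.inl ⟨hxs, h⟩)
        rw [← hxa, pf_invol]
  rcases st.brick.2.2 ((S \ {a1}) ∪ T) htight with ⟨w, hw⟩ | ⟨w, hw⟩
  · have hsubT : (G.deleteEdges {e, f}).neighborSet a1 ⊆ T := fun y hy => hclose a1 h1 y hy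
    have h2T : 1 < T.ncard := by
      have := Set.ncard_le_ncard hsubT (Set.toFinite _)
      rw [st.ncard_nbhdH_a1] at this
      omega
    obtain ⟨y1, hy1, y2, hy2, hy12⟩ := (Set.one_lt_ncard (Set.toFinite _)).1 h2T
    have e1 : y1 = w := Set.mem_singleton_iff.1 (hw ▸ (Or.inr hy1 : y1 ∈ ((S \ {a1}) ∪ T)))
    have e2 : y2 = w := Set.mem_singleton_iff.1 (hw ▸ (Or.inr hy2 : y2 ∈ ((S \ {a1}) ∪ T)))
    exact hy12 (e1.trans e2.symm)
  · have e1 : a1 = w := Set.mem_singleton_iff.1 (hw ▸ (Set.mem_compl_iff ((S \ {a1}) ∪ T) a1).2 ha1W)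
    have e2 : a2 = w := Set.mem_singleton_iff.1 (hw ▸ (Set.mem_compl_iff ((S \ {a1}) ∪ T) a2).2 ha2W)
    exact st.ne_a (e1.trans e2.symm)

lemma caseC11 (h1 : a1 ∈ S) (h2 : a2 ∉ S) (h3 : b1 ∉ T) (h4 : b2 ∈ T) : False := by
  have ha1W : a1 ∉ ((S \ {a1}) ∪ T) := by
    rintro (⟨-, h⟩ | h)
    · exact h rfl
    · exact hT h st.ha1
  have ha2W : a2 ∉ ((S \ {a1}) ∪ T) := by
    rintro (⟨h, -⟩ | h)
    · exact h2 h
    · exact hT h st.ha2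
  have hb1W : b1 ∉ ((S \ {a1}) ∪ T) := by
    rintro (⟨h, -⟩ | h)
    · exact st.hb1 (hS h)
    · exact h3 h
  have htight : IsTightCut G ((S \ {a1}) ∪ T) := by
    intro M hM
    by_cases hMe : e ∈ M.edgeSet
    · have hMf : f ∈ M.edgeSet := (st.dep hM).1 hMe
      refine cross_ncard_one hM (Or.inr h4 : b2 ∈ ((S \ {a1}) ∪ T)) (by rw [st.pf_f2 hM hMf]; exact hb1W) ?_
      intro x hxW hxm
      rcases hxW with ⟨hxS, hxa1⟩ | hxT
      · simp only [Set.mem_singleton_iff] at hxa1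
        exact absurd (Or.inr (st.mS_mem hM hclose hS hMe x hxS hxa1 (fun h => h2 (h ▸ hxS)))) hxm
      · by_cases hxb2 : x = b2
        · exact hxb2
        · -- x ∈ T \ {b2} = image of S \ {a1}
          have hIsub : pf hM '' (S \ {a1}) ⊆ T \ {b2} := by
            rintro y ⟨z, ⟨hz, hz1⟩, rfl⟩
            simp only [Set.mem_singleton_iff] at hz1
            refine ⟨st.mS_mem hM hclose hS hMe z hz hz1 (fun h => h2 (h ▸ hz)), ?_⟩
            simp only [Set.mem_singleton_iff]
            intro h
            have hz' : z = b1 := by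
              have := congrArg (pf hM) h
              rwa [pf_invol, st.pf_f2 hM hMf] at this
            exact st.hb1 (hz' ▸ hS hz)
          have hIeq : pf hM '' (S \ {a1}) = T \ {b2} := by
            refine Set.eq_of_subset_of_ncard_le hIsub ?_ (Set.toFinite _)
            rw [Set.ncard_image_of_injOn ((st.pfInj hM).injOn),
              Set.ncard_diff (by simpa using h4) (Set.toFinite _),
              Set.ncard_diff (by simpa using h1) (Set.toFinite _),
              Set.ncard_singleton, Set.ncard_singleton]
            omega
          have hx' : x ∈ pf hM '' (S \ {a1}) := by
            rw [hIeq]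
            exact ⟨hxT, by simpa using hxb2⟩
          obtain ⟨z, hz, hzx⟩ := hx'
          refine absurd (Or.inl ?_) hxm
          rw [← hzx, pf_invol]
          exact hz
    · have hx0T : pf hM a1 ∈ T := st.mS_not hM hclose hMe a1 h1
      refine cross_ncard_one hM (Or.inr hx0T) (by rw [pf_invol]; exact ha1W) ?_
      intro x hxW hxm
      rcases hxW with ⟨hxS, -⟩ | hxT
      · exact absurd (Or.inr (st.mS_not hM hclose hMe x hxS)) hxm
      · have hxs : pf hM x ∈ S := st.mT_not hM hclose hTS hMe x hxT
        have hxa : pf hM x = a1 := by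
          by_contra h
          exact hxm (Or.inl ⟨hxs, h⟩)
        rw [← hxa, pf_invol]
  rcases st.brick.2.2 ((S \ {a1}) ∪ T) htight with ⟨w, hw⟩ | ⟨w, hw⟩
  · have hsubT : (G.deleteEdges {e, f}).neighborSet a1 ⊆ T := fun y hy => hclose a1 h1 y hy
    have h2T : 1 < T.ncard := by
      have := Set.ncard_le_ncard hsubT (Set.toFinite _)
      rw [st.ncard_nbhdH_a1] at this
      omega
    obtain ⟨y1, hy1, y2, hy2, hy12⟩ := (Set.one_lt_ncard (Set.toFinite _)).1 h2T
    have e1 : y1 = w := Set.mem_singleton_iff.1 (hw ▸ (Or.inr hy1 : y1 ∈ ((S \ {a1}) ∪ T)))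
    have e2 : y2 = w := Set.mem_singleton_iff.1 (hw ▸ (Or.inr hy2 : y2 ∈ ((S \ {a1}) ∪ T)))
    exact hy12 (e1.trans e2.symm)
  · have e1 : a1 = w := Set.mem_singleton_iff.1 (hw ▸ (Set.mem_compl_iff ((S \ {a1}) ∪ T) a1).2 ha1W)
    have e2 : a2 = w := Set.mem_singleton_iff.1 (hw ▸ (Set.mem_compl_iff ((S \ {a1}) ∪ T) a2).2 ha2W)
    exact st.ne_a (e1.trans e2.symm)

lemma caseC21 (h1 : a1 ∈ S) (h2 : a2 ∈ S) (h3 : b1 ∉ T) (h4 : b2 ∈ T) : False := by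
  have hb1W : b1 ∈ (insert b1 (S ∪ T)) := Set.mem_insert _ _
  have ha1W : a1 ∈ (insert b1 (S ∪ T)) := Set.mem_insert_iff.2 (Or.inr (Or.inl h1))
  have ha2W : a2 ∈ (insert b1 (S ∪ T)) := Set.mem_insert_iff.2 (Or.inr (Or.inl h2))
  have hpair_S : ({a1, a2} : Set V) ⊆ S := by
    intro z hz
    rcases hz with rfl | hz
    · exact h1
    · simp only [Set.mem_singleton_iff] at hz; exact hz ▸ h2
  have htight : IsTightCut G (insert b1 (S ∪ T)) := by
    intro M hM
    by_cases hMe : e ∈ M.edgeSet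
    · have hMf : f ∈ M.edgeSet := (st.dep hM).1 hMe
      set I : Set V := pf hM '' (S \ {a1, a2}) with hI
      have hIsub : I ⊆ T \ {b2} := by
        rintro y ⟨x, ⟨hx, hx'⟩, rfl⟩
        simp only [Set.mem_insert_iff, Set.mem_singleton_iff, not_or] at hx'
        refine ⟨st.mS_mem hM hclose hS hMe x hx hx'.1 hx'.2, ?_⟩
        simp only [Set.mem_singleton_iff]
        intro h
        have hx'' : x = b1 := by
          have := congrArg (pf hM) h
          rwa [pf_invol, st.pf_f2 hM hMf] at this
        exact st.hb1 (hx'' ▸ hS hx)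
      have hIcard : I.ncard = S.ncard - 2 := by
        rw [hI, Set.ncard_image_of_injOn ((st.pfInj hM).injOn),
          Set.ncard_diff hpair_S (Set.toFinite _), Set.ncard_pair st.ne_a]
      have hb2I : b2 ∉ I := fun h => (hIsub h).2 rfl
      have hIT : insert b2 I ⊆ T := by
        intro z hz
        rcases Set.mem_insert_iff.1 hz with rfl | hz
        · exact h4
        · exact (hIsub hz).1
      have hScard : 2 ≤ S.ncard := by
        rw [← Set.ncard_pair st.ne_a]
        exact Set.ncard_le_ncard hpair_S (Set.toFinite _)
      have hJcard : (T \ insert b2 I).ncard = 1 := by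
        rw [Set.ncard_diff hIT (Set.toFinite _), Set.ncard_insert_of_notMem hb2I (Set.toFinite _)]
        omega
      obtain ⟨t0, ht0⟩ := Set.ncard_eq_one.1 hJcard
      have ht0m : t0 ∈ T \ insert b2 I := by rw [ht0]; rfl
      have ht0T : t0 ∈ T := ht0m.1
      have ht0b2 : t0 ≠ b2 := fun h => ht0m.2 (Set.mem_insert_iff.2 (Or.inl h))
      have ht0I : t0 ∉ I := fun h => ht0m.2 (Set.mem_insert_iff.2 (Or.inr h))
      have ht0b1 : t0 ≠ b1 := fun h => h3 (h ▸ ht0T)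
      obtain ⟨-, hpA⟩ := st.mT_mem hM hclose hT t0 ht0T ht0b1 ht0b2
      have hpfW : pf hM t0 ∉ (insert b1 (S ∪ T)) := by
        intro h
        rcases Set.mem_insert_iff.1 h with hp | (hpS | hpT)
        · exact st.hb1 (hp ▸ hpA)
        · by_cases hpa1 : pf hM t0 = a1
          · have : t0 = a2 := by
              have := congrArg (pf hM) hpa1
              rwa [pf_invol, st.pf_e1 hM hMe] at this
            exact (hT ht0T) (this ▸ st.ha2)
          by_cases hpa2 : pf hM t0 = a2
          · have : t0 = a1 := by
              have := congrArg (pf hM) hpa2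
              rwa [pf_invol, st.pf_e2 hM hMe] at this
            exact (hT ht0T) (this ▸ st.ha1)
          · exact ht0I ⟨pf hM t0, ⟨hpS, by simp [hpa1, hpa2]⟩, pf_invol hM t0⟩
        · exact (hT hpT) hpA
      refine cross_ncard_one hM (Set.mem_insert_iff.2 (Or.inr (Or.inr ht0T))) hpfW ?_
      intro x hxW hxm
      rcases Set.mem_insert_iff.1 hxW with rfl | (hxS | hxT)
      · refine (hxm (Set.mem_insert_iff.2 (Or.inr (Or.inr ?_)))).elim
        rw [st.pf_f1 hM hMf]
        exact h4
      · by_cases hxa1 : x = a1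
        · subst hxa1
          exact (hxm (Set.mem_insert_iff.2 (Or.inr (Or.inl (st.pf_e1 hM hMe ▸ h2))))).elim
        by_cases hxa2 : x = a2
        · subst hxa2
          exact (hxm (Set.mem_insert_iff.2 (Or.inr (Or.inl (st.pf_e2 hM hMe ▸ h1))))).elim
        · exact (hxm (Set.mem_insert_iff.2 (Or.inr (Or.inr
            (st.mS_mem hM hclose hS hMe x hxS hxa1 hxa2))))).elim
      · by_cases hxb2 : x = b2
        · subst hxb2
          exact (hxm (Set.mem_insert_iff.2 (Or.inl (st.pf_f2 hM hMf)))).elim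
        by_cases hxI : x ∈ I
        · obtain ⟨z, hz, hzx⟩ := hxI
          refine (hxm (Set.mem_insert_iff.2 (Or.inr (Or.inl ?_)))).elim
          rw [← hzx, pf_invol]
          exact hz.1
        · have hx' : x ∈ T \ insert b2 I := ⟨hxT, by
            intro h
            rcases Set.mem_insert_iff.1 h with h | h
            exacts [hxb2 h, hxI h]⟩
          rw [ht0] at hx'
          exact hx'
    · have hMf : f ∉ M.edgeSet := fun h => hMe ((st.dep hM).2 h)
      have hHadjb1 : (G.deleteEdges {e, f}).Adj b1 (pf hM b1) := by
        rw [st.hH_adj]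
        refine ⟨pf_gadj hM b1, ?_, ?_⟩ <;> intro h
        · rcases st.eq_e_cases h with ⟨h', -⟩ | ⟨h', -⟩
          · exact st.hb1 (h' ▸ st.ha1)
          · exact st.hb1 (h' ▸ st.ha2)
        · exact hMf (h ▸ pf_edge_mem hM b1)
      have hpA : pf hM b1 ∈ A := by
        by_contra h
        exact st.hb1 ((st.cross_H hHadjb1).2 h)
      have hpS : pf hM b1 ∉ S := by
        intro h
        have h5 : pf hM (pf hM b1) ∈ T := st.mS_not hM hclose hMe _ h
        rw [pf_invol] at h5
        exact h3 h5
      have hpfW : pf hM b1 ∉ (insert b1 (S ∪ T)) := by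
        intro h
        rcases Set.mem_insert_iff.1 h with hp | (hp | hp)
        · exact pf_ne hM b1 hp
        · exact hpS hp
        · exact (hT hp) hpA
      refine cross_ncard_one hM hb1W hpfW ?_
      intro x hxW hxm
      rcases Set.mem_insert_iff.1 hxW with rfl | (hxS | hxT)
      · rfl
      · exact (hxm (Set.mem_insert_iff.2 (Or.inr (Or.inr
          (st.mS_not hM hclose hMe x hxS))))).elim
      · exact (hxm (Set.mem_insert_iff.2 (Or.inr (Or.inl
          (st.mT_not hM hclose hTS hMe x hxT))))).elim
  rcases st.brick.2.2 (insert b1 (S ∪ T)) htight with ⟨w, hw⟩ | ⟨w, hw⟩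
  · have e1 : a1 = w := Set.mem_singleton_iff.1 (hw ▸ ha1W)
    have e2 : a2 = w := Set.mem_singleton_iff.1 (hw ▸ ha2W)
    exact st.ne_a (e1.trans e2.symm)
  · have hwW : w ∉ (insert b1 (S ∪ T)) := by
      have hmem : w ∈ (insert b1 (S ∪ T))ᶜ := by rw [hw]; rfl
      exact hmem
    have hmemW : ∀ z, z ≠ w → z ∈ (insert b1 (S ∪ T)) := by
      intro z hz
      by_contra h
      exact hz (Set.mem_singleton_iff.1 (hw ▸ ((Set.mem_compl_iff (insert b1 (S ∪ T)) z).2 h)))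
    by_cases hwA : w ∈ A
    · -- degenerate case: use an edge at b1 contained in no perfect matching
      have hAw : ∀ z ∈ A, z = w ∨ z ∈ S := by
        intro z hzA
        by_cases hz : z = w
        · exact Or.inl hz
        · rcases Set.mem_insert_iff.1 (hmemW z hz) with rfl | (hzS | hzT)
          · exact absurd hzA st.hb1
          · exact Or.inr hzS
          · exact absurd hzA (hT hzT)
      have hnb := st.flip.ncard_nbhdH_a1
      rw [Set.pair_comm f e] at hnb
      obtain ⟨y1, hy1, y2, hy2, hy12⟩ :=
        (Set.one_lt_ncard (s := (G.deleteEdges {e, f}).neighborSet b1) (Set.toFinite _)).1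
          (by omega)
      obtain ⟨x, hxN, hxw⟩ : ∃ x, x ∈ (G.deleteEdges {e, f}).neighborSet b1 ∧ x ≠ w := by
        by_cases h : y1 = w
        · refine ⟨y2, hy2, ?_⟩
          intro hh
          exact hy12 (by rw [h, hh])
        · exact ⟨y1, hy1, h⟩
      have hHadj : (G.deleteEdges {e, f}).Adj b1 x := hxN
      have hxA : x ∈ A := by
        by_contra h
        exact st.hb1 ((st.cross_H hHadj).2 h)
      have hxS : x ∈ S := (hAw x hxA).resolve_left hxw
      have hedge : s(b1, x) ∈ G.edgeSet := (G.mem_edgeSet).2 ((st.hH_adj.1 hHadj).1)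
      obtain ⟨M, hM, hMmem⟩ := st.brick.1.2.2 _ hedge
      have hpf : pf hM b1 = x := (mem_pf_iff hM).1 hMmem
      by_cases hMe : e ∈ M.edgeSet
      · have hb12 : pf hM b1 = b2 := st.pf_f1 hM ((st.dep hM).1 hMe)
        rw [hpf] at hb12
        exact st.hb2 (hb12 ▸ hxA)
      · have h5 : pf hM x ∈ T := st.mS_not hM hclose hMe x hxS
        have h6 : pf hM x = b1 := by rw [← hpf, pf_invol]
        exact h3 (h6 ▸ h5)
    · -- w ∉ A: cardinality contradiction
      have hAS : A = S := by
        refine Set.Subset.antisymm ?_ hS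
        intro z hzA
        rcases Set.mem_insert_iff.1 (hmemW z (fun h => hwA (h ▸ hzA))) with rfl | (hzS | hzT)
        · exact absurd hzA st.hb1
        · exact hzS
        · exact absurd hzA (hT hzT)
      have hwT : w ∉ T := fun h => hwW (Set.mem_insert_iff.2 (Or.inr (Or.inr h)))
      have hb1w : b1 ≠ w := fun h => hwW (h ▸ hb1W)
      have hAc : Aᶜ = T ∪ {b1, w} := by
        ext z
        simp only [Set.mem_compl_iff, Set.mem_union, Set.mem_insert_iff, Set.mem_singleton_iff]
        constructor
        · intro hz
          by_cases hzw : z = w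
          · exact Or.inr (Or.inr hzw)
          · rcases Set.mem_insert_iff.1 (hmemW z hzw) with rfl | (hzS | hzT)
            · exact Or.inr (Or.inl rfl)
            · exact absurd (hS hzS) hz
            · exact Or.inl hzT
        · rintro (hzT | rfl | rfl)
          · exact hT hzT
          · exact st.hb1
          · exact hwA
      have hcc : Aᶜ.ncard = T.ncard + 2 := by
        rw [hAc, Set.ncard_union_eq ?disj (Set.toFinite _) (Set.toFinite _),
          Set.ncard_pair hb1w]
        case disj =>
          rw [Set.disjoint_left]
          rintro z hzT (rfl | hz)
          · exact h3 hzT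
          · simp only [Set.mem_singleton_iff] at hz
            exact hwT (hz ▸ hzT)
      have hAcard : A.ncard = S.ncard := by rw [hAS]
      have hca := st.cardA
      omega

lemma caseC20 (h1 : a1 ∈ S) (h2 : a2 ∈ S) (h3 : b1 ∉ T) (h4 : b2 ∉ T) : False := by
  classical
  have hpair_S : ({a1, a2} : Set V) ⊆ S := by
    intro z hz
    rcases hz with rfl | hz
    · exact h1
    · simp only [Set.mem_singleton_iff] at hz; exact hz ▸ h2
  have hScard : 2 ≤ S.ncard := by
    rw [← Set.ncard_pair st.ne_a]
    exact Set.ncard_le_ncard hpair_S (Set.toFinite _)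
  haveI : DecidableRel (G.deleteEdges {e, f}).Adj := Classical.decRel _
  set H' := G.deleteEdges {e, f} with hH'
  set Sf := (Set.toFinite S).toFinset with hSfdef
  set Tf := (Set.toFinite T).toFinset with hTfdef
  set Af := (Set.toFinite A).toFinset with hAfdef
  have hmS : ∀ {z : V}, z ∈ Sf ↔ z ∈ S := fun {z} => Set.Finite.mem_toFinset _
  have hmT : ∀ {z : V}, z ∈ Tf ↔ z ∈ T := fun {z} => Set.Finite.mem_toFinset _
  have hmA : ∀ {z : V}, z ∈ Af ↔ z ∈ A := fun {z} => Set.Finite.mem_toFinset _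
  have hcS : S.ncard = Sf.card := Set.ncard_eq_toFinset_card _ _
  have hcT : T.ncard = Tf.card := Set.ncard_eq_toFinset_card _ _
  -- (1) darts from T into A: every vertex of T has all 3 H-neighbours in A
  have n1 : db H' Tf Af = Tf.card * 3 := by
    rw [db_eq_sum]
    have hterm : ∀ t ∈ Tf, ((Af.filter fun w => H'.Adj t w).card) = 3 := by
      intro t htf
      have htT : t ∈ T := hmT.1 htf
      have hsub : H'.neighborSet t ⊆ ↑Af := by
        intro y hy
        have hy' : H'.Adj t y := hy
        have hyA : y ∈ A := by
          by_contra h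
          exact (hT htT) ((st.cross_H hy').2 h)
        exact Finset.mem_coe.2 (hmA.2 hyA)
      rw [filter_card_of_nbhd_subset _ hsub, hH']
      rw [st.nbhdH_other (fun h => (hT htT) (by rw [h]; exact st.ha1))
        (fun h => (hT htT) (by rw [h]; exact st.ha2))
        (fun h => h3 (h ▸ htT)) (fun h => h4 (h ▸ htT))]
      exact st.cubic t
    rw [Finset.sum_congr rfl hterm, Finset.sum_const, smul_eq_mul]
  -- (2) darts from S into T: e removes one edge at each of a1 a2
  have n2 : db H' Sf Tf + 2 = Sf.card * 3 := by
    rw [db_eq_sum]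
    have hterm : ∀ v ∈ Sf, ((Tf.filter fun w => H'.Adj v w).card) = (H'.neighborSet v).ncard := by
      intro v hvf
      apply filter_card_of_nbhd_subset
      intro y hy
      exact Finset.mem_coe.2 (hmT.2 (hclose v (hmS.1 hvf) y hy))
    rw [Finset.sum_congr rfl hterm]
    have ha1f : a1 ∈ Sf := hmS.2 h1
    have ha2f : a2 ∈ Sf.erase a1 := Finset.mem_erase.2 ⟨st.ne_a.symm, hmS.2 h2⟩
    rw [← Finset.add_sum_erase _ _ ha1f, ← Finset.add_sum_erase _ _ ha2f]
    have hrest : ∀ v ∈ (Sf.erase a1).erase a2, (H'.neighborSet v).ncard = 3 := by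
      intro v hv
      have hv2 := Finset.mem_erase.1 hv
      have hv1 := Finset.mem_erase.1 hv2.2
      have hvS : v ∈ S := hmS.1 hv1.2
      rw [hH', st.nbhdH_other hv1.1 hv2.1
        (fun h => st.hb1 (h ▸ hS hvS)) (fun h => st.hb2 (h ▸ hS hvS))]
      exact st.cubic v
    rw [Finset.sum_congr rfl hrest, Finset.sum_const, smul_eq_mul]
    have e1 : (H'.neighborSet a1).ncard = 2 := by rw [hH']; exact st.ncard_nbhdH_a1
    have e2 : (H'.neighborSet a2).ncard = 2 := by rw [hH']; exact st.swapE.ncard_nbhdH_a1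
    rw [e1, e2]
    have hc1 : (Sf.erase a1).card = Sf.card - 1 := Finset.card_erase_of_mem ha1f
    have hc2 : ((Sf.erase a1).erase a2).card = (Sf.erase a1).card - 1 :=
      Finset.card_erase_of_mem ha2f
    have hpos : 0 < (Sf.erase a1).card := Finset.card_pos.2 ⟨a2, ha2f⟩
    omega
  -- (3) splitting the darts from T
  have hsubSA : Sf ⊆ Af := fun z hz => hmA.2 (hS (hmS.1 hz))
  have n3 : db H' Tf Af = db H' Tf Sf + db H' Tf (Af \ Sf) := by
    conv_lhs => rw [← Finset.union_sdiff_of_subset hsubSA]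
    exact db_union_right _ _ Finset.disjoint_sdiff
  have n4 : db H' Tf Sf = db H' Sf Tf := db_comm _ _ _
  have hPairs : db H' Tf (Af \ Sf) = 2 := by
    have : Tf.card = Sf.card := by omega
    omega
  -- extract the unique pair (t1, u1)
  have hPpos : 0 < ((Tf ×ˢ (Af \ Sf)).filter fun p => H'.Adj p.1 p.2).card := by
    have : db H' Tf (Af \ Sf) =
        ((Tf ×ˢ (Af \ Sf)).filter fun p => H'.Adj p.1 p.2).card := rfl
    omega
  obtain ⟨⟨t1, u1⟩, hc1⟩ := Finset.card_pos.1 hPpos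
  simp only [Finset.mem_filter, Finset.mem_product, Finset.mem_sdiff] at hc1
  have ht1T : t1 ∈ T := hmT.1 hc1.1.1
  have hu1A : u1 ∈ A := hmA.1 hc1.1.2.1
  have hu1S : u1 ∉ S := fun h => hc1.1.2.2 (hmS.2 h)
  -- key: every perfect matching containing e matches t1 with u1
  have hkey : ∀ (M : G.Subgraph) (hM : M.IsPerfectMatching), e ∈ M.edgeSet →
      pf hM t1 = u1 ∧ t1 ∈ T \ (pf hM '' (S \ {a1, a2})) ∧
      (∀ x ∈ T \ (pf hM '' (S \ {a1, a2})), pf hM x ∈ A ∧ pf hM x ∉ S ∧ pf hM x ∉ T) ∧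
      (T \ (pf hM '' (S \ {a1, a2}))).ncard = 2 := by
    intro M hM hMe
    have hIsub : pf hM '' (S \ {a1, a2}) ⊆ T := by
      rintro y ⟨x, ⟨hx, hx'⟩, rfl⟩
      simp only [Set.mem_insert_iff, Set.mem_singleton_iff, not_or] at hx'
      exact st.mS_mem hM hclose hS hMe x hx hx'.1 hx'.2
    have hIcard : (pf hM '' (S \ {a1, a2})).ncard = S.ncard - 2 := by
      rw [Set.ncard_image_of_injOn ((st.pfInj hM).injOn),
        Set.ncard_diff hpair_S (Set.toFinite _), Set.ncard_pair st.ne_a]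
    have hD2 : (T \ (pf hM '' (S \ {a1, a2}))).ncard = 2 := by
      rw [Set.ncard_diff hIsub (Set.toFinite _)]
      omega
    have hDfact : ∀ x ∈ T \ (pf hM '' (S \ {a1, a2})),
        pf hM x ∈ A ∧ pf hM x ∉ S ∧ pf hM x ∉ T ∧ H'.Adj x (pf hM x) := by
      rintro x ⟨hxT, hxI⟩
      have hxb1 : x ≠ b1 := fun h => h3 (h ▸ hxT)
      have hxb2 : x ≠ b2 := fun h => h4 (h ▸ hxT)
      obtain ⟨hadj, hpA⟩ := st.mT_mem hM hclose hT x hxT hxb1 hxb2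
      have hpS : pf hM x ∉ S := by
        intro h
        by_cases hp1 : pf hM x = a1
        · have hx1 : x = a2 := by
            have := congrArg (pf hM) hp1
            rwa [pf_invol, st.pf_e1 hM hMe] at this
          exact (hT hxT) (hx1 ▸ st.ha2)
        by_cases hp2 : pf hM x = a2
        · have hx1 : x = a1 := by
            have := congrArg (pf hM) hp2
            rwa [pf_invol, st.pf_e2 hM hMe] at this
          exact (hT hxT) (hx1 ▸ st.ha1)
        · exact hxI ⟨pf hM x, ⟨h, by simp [hp1, hp2]⟩, pf_invol hM x⟩
      have hpT : pf hM x ∉ T := fun h => (hT h) hpA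
      exact ⟨hpA, hpS, hpT, hadj⟩
    have hDfcard : ((Set.toFinite (T \ (pf hM '' (S \ {a1, a2})))).toFinset).card = 2 := by
      rw [← Set.ncard_eq_toFinset_card _ _]
      exact hD2
    have hφsub : ((Set.toFinite (T \ (pf hM '' (S \ {a1, a2})))).toFinset).image
        (fun x => (x, pf hM x)) ⊆ (Tf ×ˢ (Af \ Sf)).filter fun p => H'.Adj p.1 p.2 := by
      intro p hp
      obtain ⟨x, hxDf, rfl⟩ := Finset.mem_image.1 hp
      have hxD := (Set.Finite.mem_toFinset _).1 hxDf
      obtain ⟨hpA, hpS, hpT, hadj⟩ := hDfact x hxD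
      simp only [Finset.mem_filter, Finset.mem_product, Finset.mem_sdiff]
      exact ⟨⟨hmT.2 hxD.1, hmA.2 hpA, fun h => hpS (hmS.1 h)⟩, hadj⟩
    have hφcard : (((Set.toFinite (T \ (pf hM '' (S \ {a1, a2})))).toFinset).image
        (fun x => (x, pf hM x))).card = 2 := by
      rw [Finset.card_image_of_injOn (fun x _ y _ h => congrArg Prod.fst h)]
      exact hDfcard
    have hφeq : ((Set.toFinite (T \ (pf hM '' (S \ {a1, a2})))).toFinset).image
        (fun x => (x, pf hM x)) = (Tf ×ˢ (Af \ Sf)).filter fun p => H'.Adj p.1 p.2 := by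
      apply Finset.eq_of_subset_of_card_le hφsub
      have : db H' Tf (Af \ Sf) =
          ((Tf ×ˢ (Af \ Sf)).filter fun p => H'.Adj p.1 p.2).card := rfl
      omega
    have hc1' : (t1, u1) ∈ ((Set.toFinite (T \ (pf hM '' (S \ {a1, a2})))).toFinset).image
        (fun x => (x, pf hM x)) := by
      rw [hφeq]
      simp only [Finset.mem_filter, Finset.mem_product, Finset.mem_sdiff]
      exact hc1
    obtain ⟨x, hxDf, hxeq⟩ := Finset.mem_image.1 hc1'
    have hx1 : x = t1 := congrArg Prod.fst hxeq
    have hx2 : pf hM x = u1 := congrArg Prod.snd hxeq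
    subst hx1
    exact ⟨hx2, (Set.Finite.mem_toFinset _).1 hxDf,
      fun z hz => ⟨(hDfact z hz).1, (hDfact z hz).2.1, (hDfact z hz).2.2.1⟩, hD2⟩
  -- the tight cut
  have ht1ne_a1 : a1 ≠ t1 := fun h => (hT ht1T) (h ▸ st.ha1)
  have ht1ne_a2 : a2 ≠ t1 := fun h => (hT ht1T) (h ▸ st.ha2)
  have htight : IsTightCut G ((S ∪ T) \ {t1}) := by
    intro M hM
    by_cases hMe : e ∈ M.edgeSet
    · obtain ⟨hpt1, ht1D, hDfact', hD2⟩ := hkey M hM hMe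
      have hDt1 : ((T \ (pf hM '' (S \ {a1, a2}))) \ {t1}).ncard = 1 := by
        rw [Set.ncard_diff (Set.singleton_subset_iff.2 ht1D) (Set.toFinite _),
          Set.ncard_singleton, hD2]
      obtain ⟨t2, ht2⟩ := Set.ncard_eq_one.1 hDt1
      have ht2m : t2 ∈ (T \ (pf hM '' (S \ {a1, a2}))) \ {t1} := by rw [ht2]; rfl
      have ht2D := ht2m.1
      have ht2t1 : t2 ≠ t1 := ht2m.2
      obtain ⟨hpA2, hpS2, hpT2⟩ := hDfact' t2 ht2D
      refine cross_ncard_one hM (x0 := t2) ⟨Or.inr ht2D.1, ht2t1⟩ ?_ ?_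
      · rintro ⟨hc, -⟩
        rcases hc with h | h
        exacts [hpS2 h, hpT2 h]
      · rintro x ⟨hxST, hxt1⟩ hxm
        rcases hxST with hxS | hxT
        · by_cases hxa1 : x = a1
          · subst hxa1
            refine (hxm ⟨Or.inl ?_, ht1ne_a2 ∘ ?_⟩).elim
            · rw [st.pf_e1 hM hMe]; exact h2
            · rw [st.pf_e1 hM hMe]; exact id
          by_cases hxa2 : x = a2
          · subst hxa2
            refine (hxm ⟨Or.inl ?_, ht1ne_a1 ∘ ?_⟩).elim
            · rw [st.pf_e2 hM hMe]; exact h1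
            · rw [st.pf_e2 hM hMe]; exact id
          · have hpT' : pf hM x ∈ T := st.mS_mem hM hclose hS hMe x hxS hxa1 hxa2
            have hne : pf hM x ≠ t1 := by
              intro h
              have hx1 : x = u1 := by
                have := congrArg (pf hM) h
                rwa [pf_invol, hpt1] at this
              exact hu1S (hx1 ▸ hxS)
            exact (hxm ⟨Or.inr hpT', hne⟩).elim
        · by_cases hxI : x ∈ pf hM '' (S \ {a1, a2})
          · obtain ⟨z, hz, hzx⟩ := hxI
            have hpz : pf hM x = z := by rw [← hzx, pf_invol]
            have hzt1 : z ≠ t1 := fun h => (hT ht1T) (h ▸ hS hz.1)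
            exact (hxm ⟨Or.inl (hpz ▸ hz.1), hpz ▸ hzt1⟩).elim
          · have hx' : x ∈ (T \ (pf hM '' (S \ {a1, a2}))) \ {t1} := ⟨⟨hxT, hxI⟩, hxt1⟩
            rw [ht2] at hx'
            exact hx'
    · have hw1S : pf hM t1 ∈ S := st.mT_not hM hclose hTS hMe t1 ht1T
      have hw1ne : pf hM t1 ≠ t1 := fun h => (hT ht1T) (h ▸ hS hw1S)
      refine cross_ncard_one hM (x0 := pf hM t1) ⟨Or.inl hw1S, hw1ne⟩ ?_ ?_
      · rw [pf_invol]
        rintro ⟨-, hc⟩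
        exact hc rfl
      · rintro x ⟨hxST, hxt1⟩ hxm
        rcases hxST with hxS | hxT
        · have hpT' : pf hM x ∈ T := st.mS_not hM hclose hMe x hxS
          by_cases hp : pf hM x = t1
          · have := congrArg (pf hM) hp
            rw [pf_invol] at this
            exact this
          · exact (hxm ⟨Or.inr hpT', hp⟩).elim
        · have hpS' : pf hM x ∈ S := st.mT_not hM hclose hTS hMe x hxT
          have hne : pf hM x ≠ t1 := fun h => (hT ht1T) (h ▸ hS hpS')
          exact (hxm ⟨Or.inl hpS', hne⟩).elim
  rcases st.brick.2.2 _ htight with ⟨w, hw⟩ | ⟨w, hw⟩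
  · have e1 : a1 = w := Set.mem_singleton_iff.1 (hw ▸ (⟨Or.inl h1, ht1ne_a1⟩ :
      a1 ∈ (S ∪ T) \ {t1}))
    have e2 : a2 = w := Set.mem_singleton_iff.1 (hw ▸ (⟨Or.inl h2, ht1ne_a2⟩ :
      a2 ∈ (S ∪ T) \ {t1}))
    exact st.ne_a (e1.trans e2.symm)
  · have hb1W : b1 ∉ (S ∪ T) \ {t1} := by
      rintro ⟨hc, -⟩
      rcases hc with h | h
      exacts [st.hb1 (hS h), h3 h]
    have ht1W : t1 ∉ (S ∪ T) \ {t1} := by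
      rintro ⟨-, hc⟩
      exact hc rfl
    have e1 : t1 = w := Set.mem_singleton_iff.1 (hw ▸ (Set.mem_compl_iff _ _).2 ht1W)
    have e2 : b1 = w := Set.mem_singleton_iff.1 (hw ▸ (Set.mem_compl_iff _ _).2 hb1W)
    exact h3 ((e2.trans e1.symm) ▸ ht1T)

/-- No "tight set": there is no nonempty proper `S ⊆ A` together with `T ⊆ Aᶜ` of the same
size containing all neighbours of `S` in `G − {e,f}`. -/
lemma noTight : False := by
  by_cases h1 : a1 ∈ S <;> by_cases h2 : a2 ∈ S <;>
    by_cases h3 : b1 ∈ T <;> by_cases h4 : b2 ∈ T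
  · exact st.caseC22 hS hSne hSA hT hTS hclose h1 h2 h3 h4
  · exact st.swapF.caseC21 hS hSne hSA hT hTS hclose h1 h2 h4 h3
  · exact st.caseC21 hS hSne hSA hT hTS hclose h1 h2 h3 h4
  · exact st.caseC20 hS hSne hSA hT hTS hclose h1 h2 h3 h4
  · exact st.caseC12 hS hSne hSA hT hTS hclose h1 h2 h3 h4
  · exact st.swapF.caseC11 hS hSne hSA hT hTS hclose h1 h2 h4 h3
  · exact st.caseC11 hS hSne hSA hT hTS hclose h1 h2 h3 h4
  · exact st.caseC10 hS hSne hSA hT hTS hclose h1 h2 h3 h4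
  · exact st.swapE.caseC12 hS hSne hSA hT hTS hclose h2 h1 h3 h4
  · exact st.swapE.swapF.caseC11 hS hSne hSA hT hTS hclose h2 h1 h4 h3
  · exact st.swapE.caseC11 hS hSne hSA hT hTS hclose h2 h1 h3 h4
  · exact st.swapE.caseC10 hS hSne hSA hT hTS hclose h2 h1 h3 h4
  · exact st.caseC01 hS hSne hSA hT hTS hclose h1 h2 h4
  · exact st.swapF.caseC01 hS hSne hSA hT hTS hclose h1 h2 h3
  · exact st.caseC01 hS hSne hSA hT hTS hclose h1 h2 h4
  · exact st.caseC00 hS hSne hSA hT hTS hclose h1 h2 h3 h4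

end CaseLemmas

section HallPart

lemma strictHall {S : Set V} (hS : S ⊆ A) (hSne : S.Nonempty) (hSA : S ≠ A) :
    S.ncard + 1 ≤ {y | ∃ x ∈ S, (G.deleteEdges {e, f}).Adj x y}.ncard := by
  by_contra hcon
  push_neg at hcon
  have hNA : {y | ∃ x ∈ S, (G.deleteEdges {e, f}).Adj x y} ⊆ Aᶜ := by
    rintro y ⟨x, hx, hadj⟩
    exact (st.cross_H hadj).1 (hS hx)
  have hpad : S.ncard - {y | ∃ x ∈ S, (G.deleteEdges {e, f}).Adj x y}.ncard ≤
      (Aᶜ \ {y | ∃ x ∈ S, (G.deleteEdges {e, f}).Adj x y}).ncard := by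
    rw [Set.ncard_diff hNA (Set.toFinite _)]
    have h1 : S.ncard ≤ A.ncard := Set.ncard_le_ncard hS (Set.toFinite _)
    have h2 := st.cardA
    omega
  obtain ⟨P, hPsub, hPcard⟩ := Set.exists_subset_card_eq hpad
  have hdisj : Disjoint {y | ∃ x ∈ S, (G.deleteEdges {e, f}).Adj x y} P := by
    rw [Set.disjoint_left]
    intro z hz hzP
    exact (hPsub hzP).2 hz
  have hT' : {y | ∃ x ∈ S, (G.deleteEdges {e, f}).Adj x y} ∪ P ⊆ Aᶜ := by
    intro z hz
    rcases hz with h | h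
    exacts [hNA h, (hPsub h).1]
  have hTS' : ({y | ∃ x ∈ S, (G.deleteEdges {e, f}).Adj x y} ∪ P).ncard = S.ncard := by
    rw [Set.ncard_union_eq hdisj (Set.toFinite _) (Set.toFinite _), hPcard]
    omega
  have hclose' : ∀ x ∈ S, ∀ y, (G.deleteEdges {e, f}).Adj x y →
      y ∈ {y | ∃ x ∈ S, (G.deleteEdges {e, f}).Adj x y} ∪ P :=
    fun x hx y hy => Or.inl ⟨x, hx, hy⟩
  exact st.noTight hS hSne hSA hT' hTS' hclose'

/-- every edge of `H = G − {e,f}` lies in a perfect matching of `H`. -/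
lemma edge_pm {u v : V} (huA : u ∈ A) (hadj : (G.deleteEdges {e, f}).Adj u v) :
    ∃ M : (G.deleteEdges {e, f}).Subgraph, M.IsPerfectMatching ∧ s(u, v) ∈ M.edgeSet := by
  classical
  have hvA : v ∉ A := (st.cross_H hadj).1 huA
  set t : ↥A → Finset V := fun x =>
    if (x : V) = u then {v} else (Set.toFinite ((G.deleteEdges {e, f}).neighborSet (x : V))).toFinset
    with ht
  have htB : ∀ (x : ↥A) (y : V), y ∈ t x → (G.deleteEdges {e, f}).Adj (x : V) y := by
    intro x y hy
    simp only [ht] at hy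
    by_cases hx : (x : V) = u
    · rw [if_pos hx, Finset.mem_singleton] at hy
      subst hy
      rw [hx]
      exact hadj
    · rw [if_neg hx, Set.Finite.mem_toFinset] at hy
      exact hy
  -- Hall's condition
  have hhall : ∀ s : Finset ↥A, s.card ≤ (s.biUnion t).card := by
    intro s
    rcases Finset.eq_empty_or_nonempty s with rfl | hs
    · simp
    set sv : Finset V := s.image Subtype.val with hsv
    have hsvcard : sv.card = s.card := Finset.card_image_of_injective _ Subtype.val_injective
    have hsvA : ∀ z ∈ sv, z ∈ A := by
      intro z hz
      obtain ⟨x, -, rfl⟩ := Finset.mem_image.1 hz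
      exact x.2
    have hNsub : ∀ z, (∃ x ∈ (↑(sv.erase u) : Set V), (G.deleteEdges {e, f}).Adj x z) →
        z ∈ s.biUnion t := by
      rintro z ⟨x, hx, hadjx⟩
      have hx' : x ∈ sv.erase u := hx
      have hxu : x ≠ u := (Finset.mem_erase.1 hx').1
      have hxsv : x ∈ sv := (Finset.mem_erase.1 hx').2
      obtain ⟨x', hx's, hx'v⟩ := Finset.mem_image.1 hxsv
      refine Finset.mem_biUnion.2 ⟨x', hx's, ?_⟩
      simp only [ht]
      rw [if_neg (by rw [hx'v]; exact hxu), Set.Finite.mem_toFinset]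
      rw [hx'v]
      exact hadjx
    by_cases hcase : (sv.erase u).Nonempty
    · have hsub : (↑(sv.erase u) : Set V) ⊆ A := by
        intro z hz
        exact hsvA z (Finset.mem_erase.1 hz).2
      have hne : (↑(sv.erase u) : Set V).Nonempty := by
        obtain ⟨z, hz⟩ := hcase
        exact ⟨z, hz⟩
      have hSA' : (↑(sv.erase u) : Set V) ≠ A := by
        intro h
        have : u ∈ (↑(sv.erase u) : Set V) := h ▸ huA
        exact (Finset.mem_erase.1 this).1 rfl
      have hhall' := st.strictHall hsub hne hSA'
      rw [Set.ncard_coe_finset] at hhall'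
      have hNfin : (Set.toFinite {y | ∃ x ∈ (↑(sv.erase u) : Set V),
          (G.deleteEdges {e, f}).Adj x y}).toFinset ⊆ s.biUnion t := by
        intro z hz
        rw [Set.Finite.mem_toFinset] at hz
        exact hNsub z hz
      have hNcard := Finset.card_le_card hNfin
      rw [← Set.ncard_eq_toFinset_card _ _] at hNcard
      have herase : (sv.erase u).card ≥ sv.card - 1 := by
        by_cases hu : u ∈ sv
        · rw [Finset.card_erase_of_mem hu]
        · rw [Finset.erase_eq_of_notMem hu]
          omega
      by_cases hu : u ∈ sv
      · have hueq : (sv.erase u).card = sv.card - 1 := Finset.card_erase_of_mem hu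
        have hsvpos : 0 < sv.card := Finset.card_pos.2 ⟨u, hu⟩
        omega
      · have hueq : (sv.erase u).card = sv.card := by rw [Finset.erase_eq_of_notMem hu]
        omega
    · -- sv.erase u is empty : s = {u}
      have hsv1 : sv.card ≤ 1 := by
        by_cases hu : u ∈ sv
        · have h0 : (sv.erase u).card = 0 := by
            rw [Finset.not_nonempty_iff_eq_empty.1 hcase]
            rfl
          have h1 := Finset.card_erase_of_mem hu
          omega
        · rw [Finset.erase_eq_of_notMem hu] at hcase
          rw [Finset.not_nonempty_iff_eq_empty.1 hcase]
          simp
      have hucard : u ∈ sv := by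
        by_contra hu
        rw [Finset.erase_eq_of_notMem hu] at hcase
        obtain ⟨z, hz⟩ := hs
        exact hcase ⟨_, Finset.mem_image_of_mem Subtype.val hz⟩
      obtain ⟨x', hx's, hx'v⟩ := Finset.mem_image.1 hucard
      have hv : v ∈ s.biUnion t := by
        refine Finset.mem_biUnion.2 ⟨x', hx's, ?_⟩
        simp only [ht]
        rw [if_pos hx'v]
        exact Finset.mem_singleton_self v
      have : 0 < (s.biUnion t).card := Finset.card_pos.2 ⟨v, hv⟩
      omega
  obtain ⟨F, hFinj, hFmem⟩ := (Finset.all_card_le_biUnion_card_iff_exists_injective t).1 hhall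
  have hFadj : ∀ x : ↥A, (G.deleteEdges {e, f}).Adj (x : V) (F x) :=
    fun x => htB x (F x) (hFmem x)
  have hFB : ∀ x : ↥A, F x ∉ A := fun x => (st.cross_H (hFadj x)).1 x.2
  -- surjectivity of F onto Aᶜ
  haveI : DecidablePred (· ∈ A) := Classical.decPred _
  have himg : ∀ w, w ∉ A → ∃ x : ↥A, F x = w := by
    intro w hw
    have hcard1 : (Finset.univ.image F).card = Fintype.card ↥A := by
      rw [Finset.card_image_of_injective _ hFinj, Finset.card_univ]
    have hcard2 : Fintype.card ↥A = A.ncard := by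
      rw [← Nat.card_coe_set_eq, Nat.card_eq_fintype_card]
    have hsub : Finset.univ.image F ⊆ (Set.toFinite Aᶜ).toFinset := by
      intro z hz
      obtain ⟨x, -, rfl⟩ := Finset.mem_image.1 hz
      rw [Set.Finite.mem_toFinset]
      exact hFB x
    have heq : Finset.univ.image F = (Set.toFinite Aᶜ).toFinset := by
      apply Finset.eq_of_subset_of_card_le hsub
      rw [← Set.ncard_eq_toFinset_card _ _, hcard1, hcard2]
      exact st.cardA.ge
    have hwmem : w ∈ (Set.toFinite Aᶜ).toFinset := by
      rw [Set.Finite.mem_toFinset]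
      exact hw
    rw [← heq] at hwmem
    obtain ⟨x, -, hx⟩ := Finset.mem_image.1 hwmem
    exact ⟨x, hx⟩
  -- build the perfect matching of G − {e,f}
  refine ⟨{ verts := Set.univ
            Adj := fun x y => (∃ hx : x ∈ A, F ⟨x, hx⟩ = y) ∨ (∃ hy : y ∈ A, F ⟨y, hy⟩ = x)
            adj_sub := ?_
            edge_vert := fun _ => Set.mem_univ _
            symm := ?_ }, ?_, ?_⟩
  · rintro x y (⟨hx, rfl⟩ | ⟨hy, rfl⟩)
    · exact hFadj ⟨x, hx⟩
    · exact (hFadj ⟨y, hy⟩).symm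
  · constructor
    rintro x y (h | h)
    exacts [Or.inr h, Or.inl h]
  · rw [Subgraph.isPerfectMatching_iff]
    intro z
    by_cases hz : z ∈ A
    · refine ⟨F ⟨z, hz⟩, Or.inl ⟨hz, rfl⟩, ?_⟩
      rintro y (⟨hx, rfl⟩ | ⟨hy, hyz⟩)
      · rfl
      · exact absurd hz (hyz ▸ hFB ⟨y, hy⟩)
    · obtain ⟨x, hx⟩ := himg z hz
      refine ⟨(x : V), Or.inr ⟨x.2, hx⟩, ?_⟩
      rintro y (⟨hy, rfl⟩ | ⟨hy, hyz⟩)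
      · exact absurd hy hz
      · have heq : (⟨y, hy⟩ : ↥A) = x := hFinj (hyz.trans hx.symm)
        exact congrArg Subtype.val heq
  · rw [Subgraph.mem_edgeSet]
    refine Or.inl ⟨huA, ?_⟩
    have h3 : t ⟨u, huA⟩ = {v} := by
      simp only [ht]
      simp
    have h4 := hFmem ⟨u, huA⟩
    rw [h3, Finset.mem_singleton] at h4
    exact h4

end HallPart

section Parity

omit st in
lemma exits_split {M : G.Subgraph} (hM : M.IsPerfectMatching) (X : Set V) :
    X.ncard % 2 = {z | z ∈ X ∧ pf hM z ∉ X}.ncard % 2 := by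
  classical
  have hsplit : X.ncard =
      {z | z ∈ X ∧ pf hM z ∈ X}.ncard + {z | z ∈ X ∧ pf hM z ∉ X}.ncard := by
    rw [← Set.ncard_union_eq (by
      rw [Set.disjoint_left]; rintro z ⟨-, h1⟩ ⟨-, h2⟩; exact h2 h1)
      (Set.toFinite _) (Set.toFinite _)]
    congr 1
    ext z
    constructor
    · intro hz
      by_cases h : pf hM z ∈ X
      · exact Or.inl ⟨hz, h⟩
      · exact Or.inr ⟨hz, h⟩
    · rintro (⟨h, -⟩ | ⟨h, -⟩) <;> exact h
  have heven : Even {z | z ∈ X ∧ pf hM z ∈ X}.ncard := by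
    refine even_ncard_of_invol _ _ (pf hM) rfl ?_ ?_ ?_
    · rintro z ⟨h1, h2⟩
      exact ⟨h2, by rw [pf_invol]; exact h1⟩
    · intro z _
      exact pf_invol hM z
    · intro z _
      exact pf_ne hM z
  obtain ⟨k, hk⟩ := heven
  omega

lemma pm_avoid : ∃ M : G.Subgraph, M.IsPerfectMatching ∧ e ∉ M.edgeSet ∧ f ∉ M.edgeSet := by
  have hN := st.cubic a1
  have hex : ∃ w, w ∈ G.neighborSet a1 ∧ w ≠ a2 := by
    by_contra h
    push_neg at h
    have hsub : G.neighborSet a1 ⊆ {a2} := fun z hz => h z hz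
    have hle := Set.ncard_le_ncard hsub (Set.toFinite _)
    rw [hN, Set.ncard_singleton] at hle
    omega
  obtain ⟨w, hw, hwa2⟩ := hex
  obtain ⟨M, hM, hMmem⟩ := st.brick.1.2.2 s(a1, w) ((G.mem_edgeSet).2 hw)
  have hpf : pf hM a1 = w := (mem_pf_iff hM).1 hMmem
  have hMe : e ∉ M.edgeSet := by
    intro h
    have h2 := st.pf_e1 hM h
    rw [hpf] at h2
    exact hwa2 h2
  exact ⟨M, hM, hMe, fun h => hMe ((st.dep hM).2 h)⟩

lemma Ztrick {X : Set V} (hX1 : a1 ∈ X) (hX2 : a2 ∉ X) (hXb1 : b1 ∈ X) (hXb2 : b2 ∉ X)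
    (hcl : ∀ z y, (G.deleteEdges {e, f}).Adj z y → (z ∈ X ↔ y ∈ X)) : False := by
  classical
  apply st.brick.2.1
  set Z : Set V := (A ∩ X) ∪ (Aᶜ \ X) with hZ
  have key : ∀ x y, G.Adj x y → (x ∈ Z ↔ y ∉ Z) := by
    intro x y hadj
    by_cases he' : s(x, y) = e
    · rcases st.eq_e_cases he' with ⟨rfl, rfl⟩ | ⟨rfl, rfl⟩
      · have h1 := st.ha1; have h2 := st.ha2
        simp only [hZ, Set.mem_union, Set.mem_inter_iff, Set.mem_diff, Set.mem_compl_iff]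
        tauto
      · have h1 := st.ha1; have h2 := st.ha2
        simp only [hZ, Set.mem_union, Set.mem_inter_iff, Set.mem_diff, Set.mem_compl_iff]
        tauto
    by_cases hf' : s(x, y) = f
    · rcases st.eq_f_cases hf' with ⟨rfl, rfl⟩ | ⟨rfl, rfl⟩
      · have h1 := st.hb1; have h2 := st.hb2
        simp only [hZ, Set.mem_union, Set.mem_inter_iff, Set.mem_diff, Set.mem_compl_iff]
        tauto
      · have h1 := st.hb1; have h2 := st.hb2
        simp only [hZ, Set.mem_union, Set.mem_inter_iff, Set.mem_diff, Set.mem_compl_iff]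
        tauto
    · have h1 := st.hcross x y hadj he' hf'
      have h2 := hcl x y (st.hH_adj.2 ⟨hadj, he', hf'⟩)
      simp only [hZ, Set.mem_union, Set.mem_inter_iff, Set.mem_diff, Set.mem_compl_iff]
      tauto
  refine ⟨Coloring.mk (fun z => if z ∈ Z then 0 else 1) ?_⟩
  intro x y hadj
  have hk := key x y hadj
  by_cases hx : x ∈ Z <;> by_cases hy : y ∈ Z
  · exact absurd hy (hk.1 hx)
  · simp [hx, hy]
  · simp [hx, hy]
  · exact absurd (hk.2 hy) hx

lemma no_split {X : Set V} (hX1 : a1 ∈ X) (hX2 : a2 ∉ X)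
    (hcl : ∀ z y, (G.deleteEdges {e, f}).Adj z y → (z ∈ X ↔ y ∈ X)) : False := by
  obtain ⟨M0, hM0, hM0e, hM0f⟩ := st.pm_avoid
  have hex0 : {z | z ∈ X ∧ pf hM0 z ∉ X} = ∅ := by
    ext z
    simp only [Set.mem_setOf_eq, Set.mem_empty_iff_false, iff_false, not_and, not_not]
    intro hz
    apply (hcl z (pf hM0 z) ?_).1 hz
    rw [st.hH_adj]
    refine ⟨pf_gadj hM0 z, ?_, ?_⟩ <;> intro h
    exacts [hM0e (h ▸ pf_edge_mem hM0 z), hM0f (h ▸ pf_edge_mem hM0 z)]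
  have hXeven : X.ncard % 2 = 0 := by
    have hp := exits_split hM0 X
    rw [hex0, Set.ncard_empty] at hp
    omega
  obtain ⟨Me, hMe, hMee⟩ := st.brick.1.2.2 e st.he
  have hMef : f ∈ Me.edgeSet := (st.dep hMe).1 hMee
  have hexMe : {z | z ∈ X ∧ pf hMe z ∉ X} ⊆ {a1, a2, b1, b2} := by
    rintro z ⟨hz, hpz⟩
    by_contra hcon
    simp only [Set.mem_insert_iff, Set.mem_singleton_iff, not_or] at hcon
    apply hpz
    apply (hcl z (pf hMe z) ?_).1 hz
    rw [st.hH_adj]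
    refine ⟨pf_gadj hMe z, ?_, ?_⟩ <;> intro h
    · rcases st.eq_e_cases h with ⟨h', -⟩ | ⟨h', -⟩
      exacts [hcon.1 h', hcon.2.1 h']
    · rcases st.eq_f_cases h with ⟨h', -⟩ | ⟨h', -⟩
      exacts [hcon.2.2.1 h', hcon.2.2.2 h']
  have ha1ex : a1 ∈ {z | z ∈ X ∧ pf hMe z ∉ X} :=
    ⟨hX1, by rw [st.pf_e1 hMe hMee]; exact hX2⟩
  have hodd : (b1 ∈ X ↔ b2 ∈ X) → False := by
    intro hbb
    have hexeq : {z | z ∈ X ∧ pf hMe z ∉ X} = {a1} := by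
      ext z
      simp only [Set.mem_singleton_iff]
      constructor
      · intro hz
        rcases hexMe hz with rfl | rfl | rfl | rfl
        · rfl
        · exact absurd hz.1 hX2
        · refine absurd (hbb.1 hz.1) ?_
          rw [← st.pf_f1 hMe hMef]
          exact hz.2
        · refine absurd (hbb.2 hz.1) ?_
          rw [← st.pf_f2 hMe hMef]
          exact hz.2
      · rintro rfl
        exact ha1ex
    have hp := exits_split hMe X
    rw [hexeq, Set.ncard_singleton] at hp
    omega
  by_cases hb1X : b1 ∈ X <;> by_cases hb2X : b2 ∈ X
  · exact hodd (by tauto)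
  · exact st.Ztrick hX1 hX2 hb1X hb2X hcl
  · exact st.swapF.Ztrick hX1 hX2 hb2X hb1X hcl
  · exact hodd (by tauto)

lemma reachE : (G.deleteEdges {e, f}).Reachable a1 a2 := by
  by_contra hreach
  set X : Set V := {z | (G.deleteEdges {e, f}).Reachable a1 z} with hXdef
  have ha1X : a1 ∈ X := by rw [hXdef]; exact Set.mem_setOf_eq ▸ (Reachable.refl a1)
  have ha2X : a2 ∉ X := by rw [hXdef]; exact hreach
  have hcl : ∀ z y, (G.deleteEdges {e, f}).Adj z y → (z ∈ X ↔ y ∈ X) := by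
    intro z y hadj
    rw [hXdef]
    simp only [Set.mem_setOf_eq]
    exact ⟨fun h => h.trans hadj.reachable, fun h => h.trans hadj.symm.reachable⟩
  exact st.no_split ha1X ha2X hcl

lemma reachF : (G.deleteEdges {e, f}).Reachable b1 b2 := by
  by_contra hreach
  set X : Set V := {z | (G.deleteEdges {e, f}).Reachable b1 z} with hXdef
  have hb1X : b1 ∈ X := by rw [hXdef]; exact Set.mem_setOf_eq ▸ (Reachable.refl b1)
  have hb2X : b2 ∉ X := by rw [hXdef]; exact hreach
  have hcl : ∀ z y, (G.deleteEdges {e, f}).Adj z y → (z ∈ X ↔ y ∈ X) := by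
    intro z y hadj
    rw [hXdef]
    simp only [Set.mem_setOf_eq]
    exact ⟨fun h => h.trans hadj.reachable, fun h => h.trans hadj.symm.reachable⟩
  refine st.flip.no_split hb1X hb2X ?_
  intro z y hadj
  rw [Set.pair_comm f e] at hadj
  exact hcl z y hadj

lemma connected : (G.deleteEdges {e, f}).Connected := by
  have hGc := st.brick.1.1
  haveI : Nonempty V := hGc.nonempty
  refine ⟨fun x y => ?_⟩
  obtain ⟨p⟩ := hGc.preconnected x y
  induction p with
  | nil => exact Reachable.refl _
  | @cons u v w h q ih =>
    refine Reachable.trans ?_ ih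
    by_cases he' : s(u, v) = e
    · rcases st.eq_e_cases he' with ⟨rfl, rfl⟩ | ⟨rfl, rfl⟩
      exacts [st.reachE, st.reachE.symm]
    by_cases hf' : s(u, v) = f
    · rcases st.eq_f_cases hf' with ⟨rfl, rfl⟩ | ⟨rfl, rfl⟩
      exacts [st.reachF, st.reachF.symm]
    · exact (st.hH_adj.2 ⟨h, he', hf'⟩).reachable

/-- The main consequence: `G − {e,f}` is matching covered. -/
lemma mcH : MatchingCovered (G.deleteEdges {e, f}) := by
  refine ⟨st.connected, ?_, ?_⟩
  · have h2 := st.ncard_nbhdH_a1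
    have hne : ((G.deleteEdges {e, f}).neighborSet a1).Nonempty :=
      Set.nonempty_of_ncard_ne_zero (by omega)
    obtain ⟨y, hy⟩ := hne
    exact ⟨s(a1, y), ((G.deleteEdges {e, f}).mem_edgeSet).2 hy⟩
  · intro g hg
    induction g using Sym2.ind with
    | _ x y =>
      have hadj : (G.deleteEdges {e, f}).Adj x y :=
        ((G.deleteEdges {e, f}).mem_edgeSet).1 hg
      by_cases hx : x ∈ A
      · exact st.edge_pm hx hadj
      · have hy : y ∈ A := by
          by_contra hyA
          exact hx ((st.cross_H hadj).2 hyA)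
        obtain ⟨M, hM, hmem⟩ := st.edge_pm hy hadj.symm
        exact ⟨M, hM, by rwa [Sym2.eq_swap]⟩

end Parity


end Setup

section Pattern

variable [DecidableEq V]

lemma fin2_eq_of_ne {i j k : Fin 2} (h1 : i ≠ k) (h2 : j ≠ k) : i = j := by
  revert i j k; decide

variable {G : SimpleGraph V}

lemma deg_split (hcubic : Cubic G) [DecidableRel G.Adj] (P Q : Finset V)
    (hdisj : Disjoint P Q) (huniv : P ∪ Q = Finset.univ) :
    P.card * 3 = db G P P + db G P Q := by
  have h1 : db G P (P ∪ Q) = db G P P + db G P Q := db_union_right G P hdisj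
  rw [huniv] at h1
  rw [← h1, db_eq_sum]
  have hterm : ∀ v ∈ P, ((Finset.univ.filter fun w => G.Adj v w).card) = 3 := by
    intro v _
    rw [filter_card_of_nbhd_subset G (fun z _ => Finset.mem_coe.2 (Finset.mem_univ z))]
    exact hcubic v
  rw [Finset.sum_congr rfl hterm, Finset.sum_const, smul_eq_mul]

lemma darts_pair [DecidableRel G.Adj] {P : Finset V} {x1 x2 : V} (h12 : x1 ≠ x2)
    (hx1 : x1 ∈ P) (hx2 : x2 ∈ P) (hadj : G.Adj x1 x2)
    (hclass : ∀ x y, G.Adj x y → x ∈ P → y ∈ P → (x = x1 ∧ y = x2) ∨ (x = x2 ∧ y = x1)) :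
    db G P P = 2 := by
  have hset : (P ×ˢ P).filter (fun p => G.Adj p.1 p.2) = {(x1, x2), (x2, x1)} := by
    ext ⟨x, y⟩
    simp only [Finset.mem_filter, Finset.mem_product, Finset.mem_insert, Finset.mem_singleton,
      Prod.mk.injEq]
    constructor
    · rintro ⟨⟨hxP, hyP⟩, hxy⟩
      exact hclass x y hxy hxP hyP
    · rintro (⟨rfl, rfl⟩ | ⟨rfl, rfl⟩)
      exacts [⟨⟨hx1, hx2⟩, hadj⟩, ⟨⟨hx2, hx1⟩, hadj.symm⟩]
  unfold db
  rw [hset, Finset.card_insert_of_notMem (by simp [h12]), Finset.card_singleton]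

lemma darts_empty [DecidableRel G.Adj] {P : Finset V}
    (hclass : ∀ x y, G.Adj x y → x ∈ P → y ∈ P → False) : db G P P = 0 := by
  unfold db
  rw [Finset.card_eq_zero, Finset.filter_eq_empty_iff]
  rintro ⟨x, y⟩ hxy
  rw [Finset.mem_product] at hxy
  exact fun h => hclass x y h hxy.1 hxy.2

lemma darts_four [DecidableRel G.Adj] {P : Finset V} {x1 x2 y1 y2 : V}
    (h12 : x1 ≠ x2) (h34 : y1 ≠ y2) (hne : s(x1, x2) ≠ s(y1, y2))
    (hx1 : x1 ∈ P) (hx2 : x2 ∈ P) (hy1 : y1 ∈ P) (hy2 : y2 ∈ P)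
    (ha : G.Adj x1 x2) (hb : G.Adj y1 y2)
    (hclass : ∀ x y, G.Adj x y → x ∈ P → y ∈ P →
      ((x = x1 ∧ y = x2) ∨ (x = x2 ∧ y = x1)) ∨ ((x = y1 ∧ y = y2) ∨ (x = y2 ∧ y = y1))) :
    db G P P = 4 := by
  have hn1 : ¬(x1 = y1 ∧ x2 = y2) := fun h => hne (Sym2.eq_iff.2 (Or.inl h))
  have hn2 : ¬(x1 = y2 ∧ x2 = y1) := fun h => hne (Sym2.eq_iff.2 (Or.inr h))
  have hset : (P ×ˢ P).filter (fun p => G.Adj p.1 p.2) =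
      {(x1, x2), (x2, x1), (y1, y2), (y2, y1)} := by
    ext ⟨x, y⟩
    simp only [Finset.mem_filter, Finset.mem_product, Finset.mem_insert, Finset.mem_singleton,
      Prod.mk.injEq]
    constructor
    · rintro ⟨⟨hxP, hyP⟩, hxy⟩
      rcases hclass x y hxy hxP hyP with (h | h) | (h | h)
      exacts [Or.inl h, Or.inr (Or.inl h), Or.inr (Or.inr (Or.inl h)),
        Or.inr (Or.inr (Or.inr h))]
    · rintro (⟨rfl, rfl⟩ | ⟨rfl, rfl⟩ | ⟨rfl, rfl⟩ | ⟨rfl, rfl⟩)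
      exacts [⟨⟨hx1, hx2⟩, ha⟩, ⟨⟨hx2, hx1⟩, ha.symm⟩, ⟨⟨hy1, hy2⟩, hb⟩, ⟨⟨hy2, hy1⟩, hb.symm⟩]
  unfold db
  rw [hset]
  rw [Finset.card_insert_of_notMem (by
      simp only [Finset.mem_insert, Finset.mem_singleton, Prod.mk.injEq]
      push_neg
      refine ⟨fun h => absurd h h12, fun h1 h2 => ?_, fun h1 h2 => ?_⟩
      · exact hn1 ⟨h1, h2⟩
      · exact hn2 ⟨h1, h2⟩),
    Finset.card_insert_of_notMem (by
      simp only [Finset.mem_insert, Finset.mem_singleton, Prod.mk.injEq]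
      push_neg
      refine ⟨fun h1 h2 => ?_, fun h1 h2 => ?_⟩
      · exact hn2 ⟨h2, h1⟩
      · exact hn1 ⟨h2, h1⟩),
    Finset.card_insert_of_notMem (by simp [h34]),
    Finset.card_singleton]

lemma exists_setup (hG : IsBrick G) (hcubic : Cubic G) {e f : Sym2 V}
    (he : e ∈ G.edgeSet) (hf : f ∈ G.edgeSet) (hef : e ≠ f)
    (hbip : (G.deleteEdges {e, f}).Colorable 2) :
    ∃ (a1 a2 b1 b2 : V) (A : Set V), Setup G e f a1 a2 b1 b2 A := by
  classical
  induction e using Sym2.ind with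
  | _ a1 a2 =>
  induction f using Sym2.ind with
  | _ b1 b2 =>
  obtain ⟨c⟩ := hbip
  have hea : G.Adj a1 a2 := (G.mem_edgeSet).1 he
  have hfb : G.Adj b1 b2 := (G.mem_edgeSet).1 hf
  have hcr : ∀ x y, G.Adj x y → s(x, y) ≠ s(a1, a2) → s(x, y) ≠ s(b1, b2) → c x ≠ c y := by
    intro x y hadj h1 h2
    refine c.valid ?_
    rw [deleteEdges_adj]
    refine ⟨hadj, ?_⟩
    rintro (h | h)
    exacts [h1 h, h2 h]
  by_cases hA : c a1 = c a2 <;> by_cases hB : c b1 = c b2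
  · by_cases hAB : c b1 = c a1
    · -- e and f inside the same colour class: impossible mod 3
      exfalso
      have h4 : db G (Finset.univ.filter fun v => c v = c a1)
          (Finset.univ.filter fun v => c v = c a1) = 4 := by
        refine darts_four hea.ne hfb.ne hef ?_ ?_ ?_ ?_ hea hfb ?_
        · simp
        · simp [← hA]
        · simp [hAB]
        · simp [← hB, hAB]
        · intro x y hxy hxP hyP
          simp only [Finset.mem_filter, Finset.mem_univ, true_and] at hxP hyP
          by_cases h1 : s(x, y) = s(a1, a2)
          · exact Or.inl (Sym2.eq_iff.1 h1)
          by_cases h2 : s(x, y) = s(b1, b2)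
          · exact Or.inr (Sym2.eq_iff.1 h2)
          · exact absurd (hxP.trans hyP.symm) (hcr x y hxy h1 h2)
      have h0 : db G (Finset.univ.filter fun v => ¬ c v = c a1)
          (Finset.univ.filter fun v => ¬ c v = c a1) = 0 := by
        refine darts_empty ?_
        intro x y hxy hxP hyP
        simp only [Finset.mem_filter, Finset.mem_univ, true_and] at hxP hyP
        by_cases h1 : s(x, y) = s(a1, a2)
        · rcases Sym2.eq_iff.1 h1 with ⟨rfl, -⟩ | ⟨rfl, -⟩
          exacts [hxP rfl, hxP hA.symm]
        by_cases h2 : s(x, y) = s(b1, b2)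
        · rcases Sym2.eq_iff.1 h2 with ⟨rfl, -⟩ | ⟨rfl, -⟩
          exacts [hxP hAB, hxP (hB.symm.trans hAB)]
        · exact (hcr x y hxy h1 h2 (fin2_eq_of_ne hxP hyP)).elim
      have hdisj : Disjoint (Finset.univ.filter fun v => c v = c a1)
          (Finset.univ.filter fun v => ¬ c v = c a1) := by
        rw [Finset.disjoint_left]
        intro v h1 h2
        exact (Finset.mem_filter.1 h2).2 (Finset.mem_filter.1 h1).2
      have huniv := Finset.filter_union_filter_not_eq (fun v => c v = c a1) Finset.univ
      have hs1 := deg_split hcubic _ _ hdisj huniv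
      have hs2 := deg_split hcubic _ _ hdisj.symm (by rw [Finset.union_comm] at huniv; exact huniv)
      have hcomm := db_comm G (Finset.univ.filter fun v => c v = c a1)
        (Finset.univ.filter fun v => ¬ c v = c a1)
      omega
    · -- good case
      refine ⟨a1, a2, b1, b2, {v | c v = c a1}, ?_⟩
      have h2a : db G (Finset.univ.filter fun v => c v = c a1)
          (Finset.univ.filter fun v => c v = c a1) = 2 := by
        refine darts_pair hea.ne ?_ ?_ hea ?_
        · simp
        · simp [← hA]
        · intro x y hxy hxP hyP
          simp only [Finset.mem_filter, Finset.mem_univ, true_and] at hxP hyP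
          by_cases h1 : s(x, y) = s(a1, a2)
          · exact Sym2.eq_iff.1 h1
          by_cases h2 : s(x, y) = s(b1, b2)
          · exfalso
            rcases Sym2.eq_iff.1 h2 with ⟨rfl, -⟩ | ⟨rfl, -⟩
            exacts [hAB hxP, hAB (hB.trans hxP)]
          · exact absurd (hxP.trans hyP.symm) (hcr x y hxy h1 h2)
      have h2b : db G (Finset.univ.filter fun v => ¬ c v = c a1)
          (Finset.univ.filter fun v => ¬ c v = c a1) = 2 := by
        refine darts_pair hfb.ne ?_ ?_ hfb ?_
        · simp [hAB]
        · simp [← hB, hAB]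
        · intro x y hxy hxP hyP
          simp only [Finset.mem_filter, Finset.mem_univ, true_and] at hxP hyP
          by_cases h2 : s(x, y) = s(b1, b2)
          · exact Sym2.eq_iff.1 h2
          by_cases h1 : s(x, y) = s(a1, a2)
          · exfalso
            rcases Sym2.eq_iff.1 h1 with ⟨rfl, -⟩ | ⟨rfl, -⟩
            exacts [hxP rfl, hxP hA.symm]
          · exact (hcr x y hxy h1 h2 (fin2_eq_of_ne hxP hyP)).elim
      have hdisj : Disjoint (Finset.univ.filter fun v => c v = c a1)
          (Finset.univ.filter fun v => ¬ c v = c a1) := by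
        rw [Finset.disjoint_left]
        intro v h1 h2
        exact (Finset.mem_filter.1 h2).2 (Finset.mem_filter.1 h1).2
      have huniv := Finset.filter_union_filter_not_eq (fun v => c v = c a1) Finset.univ
      have hs1 := deg_split hcubic _ _ hdisj huniv
      have hs2 := deg_split hcubic _ _ hdisj.symm (by rw [Finset.union_comm] at huniv; exact huniv)
      have hcomm := db_comm G (Finset.univ.filter fun v => c v = c a1)
        (Finset.univ.filter fun v => ¬ c v = c a1)
      have hcards : (Finset.univ.filter fun v => c v = c a1).card =
          (Finset.univ.filter fun v => ¬ c v = c a1).card := by omega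
      have hnc1 : ({v | c v = c a1} : Set V).ncard =
          (Finset.univ.filter fun v => c v = c a1).card := by
        rw [Set.ncard_eq_toFinset_card _ (Set.toFinite _)]
        congr 1
        ext z
        simp [Set.Finite.mem_toFinset]
      have hnc2 : ({v | c v = c a1} : Set V)ᶜ.ncard =
          (Finset.univ.filter fun v => ¬ c v = c a1).card := by
        rw [Set.ncard_eq_toFinset_card _ (Set.toFinite _)]
        congr 1
        ext z
        simp [Set.Finite.mem_toFinset, Set.mem_compl_iff]
      exact {
        brick := hG
        cubic := hcubic
        hef := hef
        hea := rfl
        hfb := rfl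
        he := he
        hf := hf
        ha1 := rfl
        ha2 := hA.symm
        hb1 := hAB
        hb2 := fun h => hAB (hB.trans h)
        hcross := by
          intro x y hadj h1 h2
          have hne := hcr x y hadj h1 h2
          constructor
          · intro hx hy
            exact hne ((hx : c x = c a1).trans (hy : c y = c a1).symm)
          · intro hy
            exact fin2_eq_of_ne hne (fun h => hy h.symm)
        cardA := by rw [hnc1, hnc2]; exact hcards }
  · -- e mono, f cross : impossible
    exfalso
    have h2a : db G (Finset.univ.filter fun v => c v = c a1)
        (Finset.univ.filter fun v => c v = c a1) = 2 := by
      refine darts_pair hea.ne ?_ ?_ hea ?_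
      · simp
      · simp [← hA]
      · intro x y hxy hxP hyP
        simp only [Finset.mem_filter, Finset.mem_univ, true_and] at hxP hyP
        by_cases h1 : s(x, y) = s(a1, a2)
        · exact Sym2.eq_iff.1 h1
        by_cases h2 : s(x, y) = s(b1, b2)
        · exfalso
          rcases Sym2.eq_iff.1 h2 with ⟨rfl, rfl⟩ | ⟨rfl, rfl⟩
          exacts [hB (hxP.trans hyP.symm), hB (hyP.trans hxP.symm)]
        · exact absurd (hxP.trans hyP.symm) (hcr x y hxy h1 h2)
    have h0 : db G (Finset.univ.filter fun v => ¬ c v = c a1)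
        (Finset.univ.filter fun v => ¬ c v = c a1) = 0 := by
      refine darts_empty ?_
      intro x y hxy hxP hyP
      simp only [Finset.mem_filter, Finset.mem_univ, true_and] at hxP hyP
      by_cases h1 : s(x, y) = s(a1, a2)
      · rcases Sym2.eq_iff.1 h1 with ⟨rfl, -⟩ | ⟨rfl, -⟩
        exacts [hxP rfl, hxP hA.symm]
      by_cases h2 : s(x, y) = s(b1, b2)
      · rcases Sym2.eq_iff.1 h2 with ⟨rfl, rfl⟩ | ⟨rfl, rfl⟩
        exacts [hB (fin2_eq_of_ne hxP hyP), hB (fin2_eq_of_ne hyP hxP)]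
      · exact hcr x y hxy h1 h2 (fin2_eq_of_ne hxP hyP)
    have hdisj : Disjoint (Finset.univ.filter fun v => c v = c a1)
        (Finset.univ.filter fun v => ¬ c v = c a1) := by
      rw [Finset.disjoint_left]
      intro v h1 h2
      exact (Finset.mem_filter.1 h2).2 (Finset.mem_filter.1 h1).2
    have huniv := Finset.filter_union_filter_not_eq (fun v => c v = c a1) Finset.univ
    have hs1 := deg_split hcubic _ _ hdisj huniv
    have hs2 := deg_split hcubic _ _ hdisj.symm (by rw [Finset.union_comm] at huniv; exact huniv)
    have hcomm := db_comm G (Finset.univ.filter fun v => c v = c a1)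
      (Finset.univ.filter fun v => ¬ c v = c a1)
    omega
  · -- e cross, f mono : impossible
    exfalso
    have h2a : db G (Finset.univ.filter fun v => c v = c b1)
        (Finset.univ.filter fun v => c v = c b1) = 2 := by
      refine darts_pair hfb.ne ?_ ?_ hfb ?_
      · simp
      · simp [← hB]
      · intro x y hxy hxP hyP
        simp only [Finset.mem_filter, Finset.mem_univ, true_and] at hxP hyP
        by_cases h2 : s(x, y) = s(b1, b2)
        · exact Sym2.eq_iff.1 h2
        by_cases h1 : s(x, y) = s(a1, a2)
        · exfalso
          rcases Sym2.eq_iff.1 h1 with ⟨rfl, rfl⟩ | ⟨rfl, rfl⟩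
          exacts [hA (hxP.trans hyP.symm), hA (hyP.trans hxP.symm)]
        · exact absurd (hxP.trans hyP.symm) (hcr x y hxy h1 h2)
    have h0 : db G (Finset.univ.filter fun v => ¬ c v = c b1)
        (Finset.univ.filter fun v => ¬ c v = c b1) = 0 := by
      refine darts_empty ?_
      intro x y hxy hxP hyP
      simp only [Finset.mem_filter, Finset.mem_univ, true_and] at hxP hyP
      by_cases h2 : s(x, y) = s(b1, b2)
      · rcases Sym2.eq_iff.1 h2 with ⟨rfl, -⟩ | ⟨rfl, -⟩
        exacts [hxP rfl, hxP hB.symm]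
      by_cases h1 : s(x, y) = s(a1, a2)
      · rcases Sym2.eq_iff.1 h1 with ⟨rfl, rfl⟩ | ⟨rfl, rfl⟩
        exacts [hA (fin2_eq_of_ne hxP hyP), hA (fin2_eq_of_ne hyP hxP)]
      · exact hcr x y hxy h1 h2 (fin2_eq_of_ne hxP hyP)
    have hdisj : Disjoint (Finset.univ.filter fun v => c v = c b1)
        (Finset.univ.filter fun v => ¬ c v = c b1) := by
      rw [Finset.disjoint_left]
      intro v h1 h2
      exact (Finset.mem_filter.1 h2).2 (Finset.mem_filter.1 h1).2
    have huniv := Finset.filter_union_filter_not_eq (fun v => c v = c b1) Finset.univ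
    have hs1 := deg_split hcubic _ _ hdisj huniv
    have hs2 := deg_split hcubic _ _ hdisj.symm (by rw [Finset.union_comm] at huniv; exact huniv)
    have hcomm := db_comm G (Finset.univ.filter fun v => c v = c b1)
      (Finset.univ.filter fun v => ¬ c v = c b1)
    omega
  · -- both cross : G would be bipartite
    exfalso
    apply hG.2.1
    refine ⟨Coloring.mk c ?_⟩
    intro x y hadj
    by_cases h1 : s(x, y) = s(a1, a2)
    · rcases Sym2.eq_iff.1 h1 with ⟨rfl, rfl⟩ | ⟨rfl, rfl⟩
      exacts [hA, fun h => hA h.symm]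
    by_cases h2 : s(x, y) = s(b1, b2)
    · rcases Sym2.eq_iff.1 h2 with ⟨rfl, rfl⟩ | ⟨rfl, rfl⟩
      exacts [hB, fun h => hB h.symm]
    · exact hcr x y hadj h1 h2

end Pattern

end Cases
/-- Let `G` be a cubic brick. If there are two edges `e, f` such that
`G − {e, f}` is bipartite, then `G − {e, f}` is matching covered; consequently `G` is
near-bipartite. -/
theorem stmt5 {V : Type*} [Fintype V] (G : SimpleGraph V)
    (hG : IsBrick G) (hcubic : Cubic G)
    (e f : Sym2 V) (he : e ∈ G.edgeSet) (hf : f ∈ G.edgeSet) (hef : e ≠ f)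
    (hbip : (G.deleteEdges {e, f}).Colorable 2) :
    MatchingCovered (G.deleteEdges {e, f}) ∧ NearBipartite G := by
  classical
  obtain ⟨a1, a2, b1, b2, A, st⟩ := exists_setup hG hcubic he hf hef hbip
  have hmc := st.mcH
  exact ⟨hmc, hG.1, hG.2.1, e, f, he, hf, hef, hbip, hmc⟩

end Paper
end

section
/- (Dulmage–Mendelsohn) Let G be a bipartite graph with bipartition (A, B) that has a perfect matching. An edge e of G lies in no perfect matching of G if and only if there exist a partition (A1, A2) of A and a partition (B1, B2) of B such that |A1| = |B1|, the edge e has one end in A2 and the other end in B1, and there is no edge of G joining a vertex of A1 to a vertex of B2. -/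
namespace Paper

open SimpleGraph

variable {V : Type*}

/-- From a perfect matching, extract the pairing function. -/
private lemma pm_fun {V : Type*} {G : SimpleGraph V} {M : G.Subgraph}
    (hM : M.IsPerfectMatching) :
    ∃ m : V → V, (∀ v, M.Adj v (m v)) ∧ (∀ v, m (m v) = v) ∧
      (∀ v w, M.Adj v w → w = m v) := by
  have hex : ∀ v, ∃! w, M.Adj v w := fun v => hM.1 (hM.2 v)
  choose m hm hmu using hex
  exact ⟨m, hm, fun v => (hmu (m v) v ((hm v).symm)).symm, hmu⟩

/-- A fixed-point-free involution along edges yields a perfect matching. -/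
private lemma pm_of_involution {V : Type*} {G : SimpleGraph V} (p : V → V)
    (hadj : ∀ v, G.Adj v (p v)) (hinv : ∀ v, p (p v) = v) :
    ∃ M : G.Subgraph, M.IsPerfectMatching ∧ ∀ v, M.Adj v (p v) := by
  refine ⟨⟨Set.univ, fun x y => y = p x, ?_, fun _ => trivial, ?_⟩,
    ⟨?_, fun v => trivial⟩, fun v => rfl⟩
  · rintro x y rfl; exact hadj x
  · constructor; rintro x y rfl; exact (hinv x).symm
  · rintro v -; exact ⟨p v, rfl, fun y hy => hy⟩

/-- Dulmage–Mendelsohn. Let `G` be a bipartite graph with bipartition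
`(A, B)` having a perfect matching. An edge `e` lies in no perfect matching of `G` iff
there are partitions `(A1, A2)` of `A` and `(B1, B2)` of `B` with `|A1| = |B1|`, with `e`
having one end in `A2` and the other in `B1`, and with no edge joining `A1` to `B2`. -/
theorem stmt9 {V : Type*} [Fintype V] (G : SimpleGraph V)
    (A B : Set V) (hdisj : Disjoint A B) (hcover : A ∪ B = Set.univ)
    (hbip : ∀ x y : V, G.Adj x y → (x ∈ A ∧ y ∈ B) ∨ (x ∈ B ∧ y ∈ A))
    (hpm : ∃ M : G.Subgraph, M.IsPerfectMatching)
    (e : Sym2 V) (he : e ∈ G.edgeSet) :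
    (∀ M : G.Subgraph, M.IsPerfectMatching → e ∉ M.edgeSet) ↔
      ∃ A1 A2 B1 B2 : Set V,
        A1 ∪ A2 = A ∧ Disjoint A1 A2 ∧ B1 ∪ B2 = B ∧ Disjoint B1 B2 ∧
        A1.ncard = B1.ncard ∧
        (∃ x ∈ A2, ∃ y ∈ B1, e = s(x, y)) ∧
        (∀ x ∈ A1, ∀ y ∈ B2, ¬ G.Adj x y) := by
  classical
  have hAB : ∀ {x y : V}, x ∈ A → G.Adj x y → y ∈ B := by
    intro x y hx hxy
    rcases hbip x y hxy with ⟨_, h⟩ | ⟨h, _⟩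
    · exact h
    · exact (Set.disjoint_left.mp hdisj hx h).elim
  have hBA : ∀ {x y : V}, x ∈ B → G.Adj x y → y ∈ A := by
    intro x y hx hxy
    rcases hbip x y hxy with ⟨h, _⟩ | ⟨_, h⟩
    · exact (Set.disjoint_left.mp hdisj h hx).elim
    · exact h
  obtain ⟨a, b, ha, hb, hadjab, heq⟩ :
      ∃ a b, a ∈ A ∧ b ∈ B ∧ G.Adj a b ∧ e = s(a, b) := by
    revert he
    induction e using Sym2.inductionOn with
    | hf u v =>
      intro he
      have huv : G.Adj u v := he
      rcases hbip u v huv with ⟨hu, hv⟩ | ⟨hu, hv⟩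
      · exact ⟨u, v, hu, hv, huv, rfl⟩
      · exact ⟨v, u, hv, hu, huv.symm, Sym2.eq_swap.symm⟩
  have hab : a ≠ b := hadjab.ne
  -- the easy Hall inequality, from the existence of a perfect matching
  obtain ⟨M0, hM0⟩ := hpm
  obtain ⟨m0, hm0adj, hm0inv, _⟩ := pm_fun hM0
  have hm0G : ∀ v, G.Adj v (m0 v) := fun v => M0.adj_sub (hm0adj v)
  have hm0inj : Function.Injective m0 := fun u v h => by
    rw [← hm0inv u, h, hm0inv]
  have hHallEasy : ∀ S : Set V, S.ncard ≤ {y | ∃ x ∈ S, G.Adj x y}.ncard := by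
    intro S
    exact Set.ncard_le_ncard_of_injOn m0 (fun x hx => ⟨x, hx, hm0G x⟩)
      hm0inj.injOn (Set.toFinite _)
  have hcardAB : A.ncard = B.ncard := by
    refine le_antisymm ?_ ?_
    · exact Set.ncard_le_ncard_of_injOn m0 (fun x hx => hAB hx (hm0G x))
        hm0inj.injOn (Set.toFinite _)
    · exact Set.ncard_le_ncard_of_injOn m0 (fun x hx => hBA hx (hm0G x))
        hm0inj.injOn (Set.toFinite _)
  constructor
  · -- forward direction
    intro hno
    set t : ↥(A \ {a}) → Finset V :=
      fun x => Finset.univ.filter (fun y => G.Adj x.1 y ∧ y ≠ b) with ht_def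
    have ht : ∀ (x : ↥(A \ {a})) (y : V), y ∈ t x ↔ (G.Adj x.1 y ∧ y ≠ b) := by
      intro x y; simp [ht_def]
    by_cases hH : ∀ s : Finset ↥(A \ {a}), s.card ≤ (s.biUnion t).card
    · -- Hall holds for the reduced graph: build a perfect matching through e
      exfalso
      obtain ⟨f, hfinj, hft⟩ :=
        (Finset.all_card_le_biUnion_card_iff_exists_injective t).mp hH
      have hfB : ∀ x : ↥(A \ {a}), f x ∈ B \ {b} := by
        intro x
        have h := (ht x (f x)).mp (hft x)
        exact ⟨hAB x.2.1 h.1, h.2⟩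
      set f' : ↥(A \ {a}) → ↥(B \ {b}) := fun x => ⟨f x, hfB x⟩ with hf'_def
      have hbij : Function.Bijective f' := by
        rw [Nat.bijective_iff_injective_and_card]
        constructor
        · intro u v huv
          exact hfinj (congrArg Subtype.val huv)
        · rw [Nat.card_coe_set_eq, Nat.card_coe_set_eq,
            Set.ncard_diff_singleton_of_mem ha,
            Set.ncard_diff_singleton_of_mem hb, hcardAB]
      set g := Equiv.ofBijective f' hbij with hg_def
      have hgadj : ∀ x : ↥(A \ {a}), G.Adj x.1 (g x : V) := by
        intro x
        exact ((ht x (f x)).mp (hft x)).1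
      set p : V → V := fun v =>
        if hv : v ∈ A \ {a} then (g ⟨v, hv⟩ : V)
        else if hv' : v ∈ B \ {b} then (g.symm ⟨v, hv'⟩ : V)
        else if v = a then b else a with hp_def
      have hnaA : a ∉ A \ {a} := fun h => h.2 rfl
      have hnaB : a ∉ B \ {b} := fun h => Set.disjoint_left.mp hdisj ha h.1
      have hnbA : b ∉ A \ {a} := fun h => Set.disjoint_left.mp hdisj h.1 hb
      have hnbB : b ∉ B \ {b} := fun h => h.2 rfl
      have hpa : p a = b := by
        simp only [hp_def]; rw [dif_neg hnaA, dif_neg hnaB]; simp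
      have hpb : p b = a := by
        simp only [hp_def]; rw [dif_neg hnbA, dif_neg hnbB, if_neg hab.symm]
      have hpA : ∀ v (hv : v ∈ A \ {a}), p v = (g ⟨v, hv⟩ : V) := by
        intro v hv; simp only [hp_def]; rw [dif_pos hv]
      have hpB : ∀ v (hv : v ∈ B \ {b}), p v = (g.symm ⟨v, hv⟩ : V) := by
        intro v hv
        have h1 : v ∉ A \ {a} := fun h => Set.disjoint_left.mp hdisj h.1 hv.1
        simp only [hp_def]; rw [dif_neg h1, dif_pos hv]
      have hcases : ∀ v : V, v = a ∨ v = b ∨ v ∈ A \ {a} ∨ v ∈ B \ {b} := by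
        intro v
        by_cases h1 : v = a
        · exact Or.inl h1
        by_cases h2 : v = b
        · exact Or.inr (Or.inl h2)
        have hv : v ∈ A ∪ B := hcover ▸ Set.mem_univ v
        rcases hv with h | h
        · exact Or.inr (Or.inr (Or.inl ⟨h, h1⟩))
        · exact Or.inr (Or.inr (Or.inr ⟨h, h2⟩))
      have hadjp : ∀ v, G.Adj v (p v) := by
        intro v
        rcases hcases v with rfl | rfl | hv | hv
        · rw [hpa]; exact hadjab
        · rw [hpb]; exact hadjab.symm
        · rw [hpA v hv]; exact hgadj ⟨v, hv⟩
        · rw [hpB v hv]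
          have h := hgadj (g.symm ⟨v, hv⟩)
          rw [Equiv.apply_symm_apply] at h
          exact h.symm
      have hinvp : ∀ v, p (p v) = v := by
        intro v
        rcases hcases v with rfl | rfl | hv | hv
        · rw [hpa, hpb]
        · rw [hpb, hpa]
        · rw [hpA v hv]
          have hw : (g ⟨v, hv⟩ : V) ∈ B \ {b} := (g ⟨v, hv⟩).2
          rw [hpB _ hw]
          have h2 : (⟨(g ⟨v, hv⟩ : V), hw⟩ : ↥(B \ {b})) = g ⟨v, hv⟩ :=
            Subtype.ext rfl
          rw [h2, Equiv.symm_apply_apply]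
        · rw [hpB v hv]
          have hw : (g.symm ⟨v, hv⟩ : V) ∈ A \ {a} := (g.symm ⟨v, hv⟩).2
          rw [hpA _ hw]
          have h2 : (⟨(g.symm ⟨v, hv⟩ : V), hw⟩ : ↥(A \ {a})) = g.symm ⟨v, hv⟩ :=
            Subtype.ext rfl
          rw [h2, Equiv.apply_symm_apply]
      obtain ⟨M, hMpm, hMadj⟩ := pm_of_involution p hadjp hinvp
      have hMab : M.Adj a b := hpa ▸ hMadj a
      exact hno M hMpm (by rw [heq]; exact Subgraph.mem_edgeSet.mpr hMab)
    · -- Hall fails: extract the partition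
      push_neg at hH
      obtain ⟨S, hS⟩ := hH
      set A1 : Set V := Subtype.val '' (↑S : Set ↥(A \ {a})) with hA1_def
      set NS : Set V := {y | ∃ x ∈ A1, G.Adj x y} with hNS_def
      have hA1sub : A1 ⊆ A \ {a} := by
        rintro x ⟨y, _, rfl⟩; exact y.2
      have hA1card : A1.ncard = S.card := by
        rw [hA1_def, Set.ncard_image_of_injective _ Subtype.val_injective,
          Set.ncard_coe_finset]
      have hNA1 : NS \ {b} = ↑(S.biUnion t) := by
        ext y
        constructor
        · rintro ⟨⟨x, hx, hadj⟩, hyb⟩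
          obtain ⟨x', hx', rfl⟩ := hx
          exact Finset.mem_coe.mpr (Finset.mem_biUnion.mpr
            ⟨x', hx', (ht x' y).mpr ⟨hadj, hyb⟩⟩)
        · intro h
          obtain ⟨x', hx', hy⟩ := Finset.mem_biUnion.mp (Finset.mem_coe.mp h)
          obtain ⟨hadj, hyb⟩ := (ht x' y).mp hy
          exact ⟨⟨x'.1, ⟨x', hx', rfl⟩, hadj⟩, hyb⟩
      have hcard1 : (NS \ {b}).ncard < A1.ncard := by
        rw [hNA1, Set.ncard_coe_finset, hA1card]; exact hS
      have hcard2 : A1.ncard ≤ NS.ncard := hHallEasy A1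
      have hbmem : b ∈ NS := by
        by_contra hbn
        rw [Set.diff_singleton_eq_self hbn] at hcard1
        omega
      have hcard3 : (NS \ {b}).ncard = NS.ncard - 1 :=
        Set.ncard_diff_singleton_of_mem hbmem
      have hNpos : 0 < NS.ncard :=
        (Set.ncard_pos (Set.toFinite _)).mpr ⟨b, hbmem⟩
      have hcardeq : A1.ncard = NS.ncard := by omega
      have hNSsub : NS ⊆ B := by
        rintro y ⟨x, hx, hadj⟩
        exact hAB (hA1sub hx).1 hadj
      refine ⟨A1, A \ A1, NS, B \ NS, ?_, ?_, ?_, ?_, hcardeq, ?_, ?_⟩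
      · exact Set.union_diff_cancel (hA1sub.trans Set.diff_subset)
      · exact disjoint_sdiff_self_right
      · exact Set.union_diff_cancel hNSsub
      · exact disjoint_sdiff_self_right
      · exact ⟨a, ⟨ha, fun h => (hA1sub h).2 rfl⟩, b, hbmem, heq⟩
      · rintro x hx y hy hadj
        exact hy.2 ⟨x, hx, hadj⟩
  · -- reverse direction
    rintro ⟨A1, A2, B1, B2, hAu, hAd, hBu, hBd, hcard, ⟨x, hx, y, hy, hexy⟩,
      hnoedge⟩ M hM heM
    obtain ⟨m, hmadj, hminv, hmu⟩ := pm_fun hM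
    have hminj : Function.Injective m := fun u v h => by
      rw [← hminv u, h, hminv]
    have hMxy : M.Adj x y := Subgraph.mem_edgeSet.mp (by rw [← hexy]; exact heM)
    have hmyx : m y = x := (hmu y x hMxy.symm).symm
    have hA1A : A1 ⊆ A := hAu ▸ Set.subset_union_left
    have key : ∀ u ∈ A1, m u ∈ B1 \ {y} := by
      intro u hu
      have hGadj : G.Adj u (m u) := M.adj_sub (hmadj u)
      have hmB : m u ∈ B := hAB (hA1A hu) hGadj
      have hmB1 : m u ∈ B1 := by
        have h : m u ∈ B1 ∪ B2 := hBu ▸ hmB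
        rcases h with h | h
        · exact h
        · exact (hnoedge u hu _ h hGadj).elim
      refine ⟨hmB1, fun hmem => ?_⟩
      have hmy : m u = y := hmem
      have hux : u = x := by rw [← hminv u, hmy, hmyx]
      exact Set.disjoint_left.mp hAd (hux ▸ hu) hx
    have hle : A1.ncard ≤ (B1 \ {y}).ncard :=
      Set.ncard_le_ncard_of_injOn m key hminj.injOn (Set.toFinite _)
    have hd : (B1 \ {y}).ncard = B1.ncard - 1 :=
      Set.ncard_diff_singleton_of_mem hy
    have hpos : 0 < B1.ncard := (Set.ncard_pos (Set.toFinite _)).mpr ⟨y, hy⟩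
    omega

end Paper
end
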